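/- arXiv:0811.3004 — 8 statements merged into one kernel-verified Lean document; each statement's English description precedes it below -/
import Mathlib

section
/- Let F be a characteristic-zero differential field whose field of constants is algebraically closed, and let E ⊇ F be a differential field extension. If x ∈ E satisfies x′ ∈ F, then either x is transcendental over F or x ∈ F. -/
/-- A derivation on a field: an additive map satisfying the Leibniz rule. -/
structure IsDerivation {E : Type*} [Field E] (D : E → E) : Prop where
  map_add : ∀ a b : E, D (a + b) = D a + D b
  leibniz : ∀ a b : E, D (a * b) = D a * b + a * D b

open Polynomial
open scoped Differential

/-- If `x` is integral over a differential subfield `K` of a differential field `A` and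
`x′` comes from `K`, then the "derived" minimal polynomial relation vanishes. -/
theorem minpoly_deriv_add_eq_zero {K A : Type*} [Field K] [Field A] [Differential K]
    [Differential A] [Algebra K A] [DifferentialAlgebra K A] {x : A} (hx : IsIntegral K x)
    {c : K} (hc : algebraMap K A c = x′) :
    Differential.mapCoeffs (minpoly K x) + derivative (minpoly K x) * C c = 0 := by
  set p := minpoly K x with hp
  have hmonic : p.Monic := minpoly.monic hx
  have hdeg : 0 < p.natDegree := minpoly.natDegree_pos hx
  have hroot : aeval x (Differential.mapCoeffs p + derivative p * C c) = 0 := by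
    have h := Differential.deriv_aeval_eq x p
    rw [minpoly.aeval, map_zero] at h
    simp only [map_add, map_mul, aeval_C, hc]
    exact h.symm
  by_contra hq
  have hle := minpoly.degree_le_of_ne_zero K x hq hroot
  have h1 : (Differential.mapCoeffs p).degree < p.degree := by
    rw [degree_eq_natDegree hmonic.ne_zero, degree_lt_iff_coeff_zero]
    intro m hm
    rcases eq_or_lt_of_le hm with h | h
    · rw [Differential.coeff_mapCoeffs, ← h, hmonic.coeff_natDegree]
      exact Differential.deriv.map_one_eq_zero
    · rw [Differential.coeff_mapCoeffs, coeff_eq_zero_of_natDegree_lt h, map_zero]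
  have h2 : (derivative p * C c).degree < p.degree :=
    lt_of_le_of_lt (le_trans (degree_mul_le _ _)
      (by simpa using add_le_add_right (degree_C_le (a := c)) (derivative p).degree))
      (degree_derivative_lt hmonic.ne_zero)
  exact absurd hle (lt_of_le_of_lt (degree_add_le _ _) (max_lt h1 h2)).not_ge

/-- Let `F` be a characteristic-zero differential field whose field of constants is
algebraically closed, and let `E ⊇ F` be a differential field extension.  If `x ∈ E`
satisfies `x' ∈ F`, then either `x` is transcendental over `F` or `x ∈ F`. -/
theorem antiderivative_transcendental_or_mem
    {E : Type*} [Field E] [CharZero E]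
    (D : E → E) (hD : IsDerivation D)
    (F : Subfield E) (hF : ∀ a ∈ F, D a ∈ F)
    (C : Subfield E) (hC : ∀ c : E, c ∈ C ↔ (c ∈ F ∧ D c = 0))
    [IsAlgClosed C]
    (x : E) (hx : D x ∈ F) :
    Transcendental F x ∨ x ∈ F := by
  rw [or_iff_not_imp_left, Transcendental, not_not]
  intro halg
  have h1 : D 1 = 0 := by
    have := hD.leibniz 1 1
    simp only [mul_one, one_mul] at this
    exact left_eq_add.mp this
  letI dE : Derivation ℤ E E :=
    { (AddMonoidHom.mk' D hD.map_add).toIntLinearMap with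
      map_one_eq_zero' := h1
      leibniz' := fun a b => by
        show D (a * b) = a • D b + b • D a
        rw [hD.leibniz a b, smul_eq_mul, smul_eq_mul]
        ring }
  letI : Differential E := ⟨dE⟩
  letI dF : Derivation ℤ F F :=
    { (AddMonoidHom.mk' (fun a : F => (⟨D a, hF a a.2⟩ : F))
        (fun a b => Subtype.ext (hD.map_add a b))).toIntLinearMap with
      map_one_eq_zero' := Subtype.ext h1
      leibniz' := fun a b => Subtype.ext (by
        show D ((a : E) * b) = (a : E) * D b + (b : E) * D a
        rw [hD.leibniz a b]; ring) }
  letI : Differential (↥F) := ⟨dF⟩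
  letI : DifferentialAlgebra (↥F) E := ⟨fun a => rfl⟩
  have hint : IsIntegral (↥F) x := halg.isIntegral
  set p := minpoly (↥F) x with hp
  set n := p.natDegree with hn
  have hn1 : 0 < n := minpoly.natDegree_pos hint
  have key := minpoly_deriv_add_eq_zero hint (c := ⟨D x, hx⟩) rfl
  have hcoeff := congrArg (fun q => Polynomial.coeff q (n - 1)) key
  simp only [coeff_add, Differential.coeff_mapCoeffs, coeff_mul_C, coeff_derivative,
    coeff_zero] at hcoeff
  rw [Nat.sub_add_cancel hn1, (minpoly.monic hint).coeff_natDegree] at hcoeff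
  -- hcoeff : (p.coeff (n-1))′ + 1 * (↑(n-1) + 1) * ⟨D x, hx⟩ = 0 in ↥F
  set a : ↥F := p.coeff (n - 1) with ha
  have hE : D (a : E) + (n : E) * D x = 0 := by
    have h2 := congrArg (Subtype.val) hcoeff
    push_cast at h2
    rw [Nat.cast_sub hn1, Nat.cast_one, sub_add_cancel] at h2
    have hval : ((a′ : ↥F) : E) = D (a : E) := rfl
    rw [hval] at h2
    rw [← h2]
    ring
  set z : E := (n : E) * x + (a : E) with hz
  have hDnat : ∀ m : ℕ, D ((m : E)) = 0 := by
    intro m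
    induction m with
    | zero =>
      have := hD.map_add 0 0
      simp only [add_zero] at this
      simpa using (left_eq_add.mp this)
    | succ k ih => push_cast; rw [hD.map_add, ih, h1, add_zero]
  have hDz : D z = 0 := by
    have h3 : D z = D ((n : E) * x) + D (a : E) := hD.map_add _ _
    rw [hD.leibniz, hDnat n, zero_mul, zero_add] at h3
    rw [h3]
    linear_combination hE
  have hintz : IsIntegral (↥F) z := by
    have ha2 : IsIntegral (↥F) ((a : E)) := by
      have : algebraMap (↥F) E a = (a : E) := rfl
      exact this ▸ isIntegral_algebraMap
    have h5 := (hint.nsmul n).add ha2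
    rwa [nsmul_eq_mul] at h5
  have key2 := minpoly_deriv_add_eq_zero hintz (c := (0 : ↥F))
    (by rw [map_zero]; exact hDz.symm)
  rw [map_zero, mul_zero, add_zero] at key2
  set m := minpoly (↥F) z with hm
  have hconst : ∀ i, D ((m.coeff i : E)) = 0 := fun i => by
    have h4 := congrArg (fun q => Polynomial.coeff q i) key2
    simp only [Differential.coeff_mapCoeffs, coeff_zero] at h4
    exact congrArg Subtype.val h4
  have hlift : m.map (algebraMap (↥F) E) ∈ Polynomial.lifts (algebraMap (↥C) E) := by
    rw [Polynomial.lifts_iff_coeff_lifts]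
    intro k
    rw [coeff_map]
    exact ⟨⟨(m.coeff k : E), (hC _).2 ⟨(m.coeff k).2, hconst k⟩⟩, rfl⟩
  obtain ⟨mC, hmap, -, hmCmonic⟩ :=
    Polynomial.lifts_and_natDegree_eq_and_monic hlift ((minpoly.monic hintz).map _)
  have hintC : IsIntegral (↥C) z := ⟨mC, hmCmonic, by
    rw [Polynomial.eval₂_eq_eval_map, hmap, ← Polynomial.eval₂_eq_eval_map,
      ← Polynomial.aeval_def]
    exact minpoly.aeval _ _⟩
  have hdeg1 : (minpoly (↥C) z).degree = 1 :=
    IsAlgClosed.degree_eq_one_of_irreducible (↥C) (minpoly.irreducible hintC)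
  obtain ⟨c, hc⟩ := minpoly.degree_eq_one_iff.mp hdeg1
  have hzC : z ∈ C := hc ▸ c.2
  have hzF : z ∈ F := ((hC z).1 hzC).1
  have hnne : (n : E) ≠ 0 := Nat.cast_ne_zero.mpr hn1.ne'
  have hxeq : x = (z - (a : E)) * ((n : E))⁻¹ := by
    rw [hz]; field_simp; ring
  rw [hxeq]
  exact F.mul_mem (F.sub_mem hzF a.2) (F.inv_mem (natCast_mem F n))
end

section
/- Let F be a characteristic-zero differential field whose field of constants C is algebraically closed, and let E ⊇ F be a no-new-constants differential field extension. Let x_1,…,x_n ∈ E satisfy x_i′ ∈ F for all i. Then either x_1,…,x_n are algebraically independent over F, or there exists a tuple (c_1,…,c_n) ∈ C^n ∖ {0} such that Σ_{i=1}^n c_i·x_i ∈ F (Ostrowski's theorem for antiderivatives). -/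
set_option synthInstance.maxHeartbeats 1000000
set_option maxHeartbeats 1000000

namespace IsDerivation
variable {E : Type*} [Field E] {D : E → E}

lemma zero (hD : IsDerivation D) : D 0 = 0 := by
  have := hD.map_add 0 0; simpa using this.symm

lemma one (hD : IsDerivation D) : D 1 = 0 := by
  have := hD.leibniz 1 1; simpa using this.symm

lemma natCast (hD : IsDerivation D) (k : ℕ) : D (k : E) = 0 := by
  induction k with
  | zero => simpa using hD.zero
  | succ k ih => push_cast; rw [hD.map_add, ih, hD.one, add_zero]

def addHom (hD : IsDerivation D) : E →+ E :=
  { toFun := D, map_zero' := hD.zero, map_add' := hD.map_add }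

@[simp] lemma addHom_apply (hD : IsDerivation D) (a : E) : hD.addHom a = D a := rfl

end IsDerivation

section Aux
variable {E : Type*} [Field E] {D : E → E}

/-- `D` restricted to `F`, as an additive monoid hom. -/
noncomputable def Fder (hD : IsDerivation D) (F : Subfield E) (hF : ∀ a ∈ F, D a ∈ F) :
    F →+ F where
  toFun a := ⟨D a, hF a a.2⟩
  map_zero' := Subtype.ext hD.zero
  map_add' a b := Subtype.ext (hD.map_add a b)

@[simp] lemma Fder_coe (hD : IsDerivation D) (F : Subfield E) (hF : ∀ a ∈ F, D a ∈ F) (a : F) :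
    (Fder hD F hF a : E) = D a := rfl

variable {n : ℕ}

/-- coefficientwise derivative of a multivariate polynomial -/
noncomputable def Pdelta (hD : IsDerivation D) (F : Subfield E) (hF : ∀ a ∈ F, D a ∈ F) :
    MvPolynomial (Fin n) F →+ MvPolynomial (Fin n) F :=
  AddMonoidAlgebra.coeffAddEquiv.symm.toAddMonoidHom.comp ((Finsupp.mapRange.addMonoidHom
    (Fder hD F hF)).comp AddMonoidAlgebra.coeffAddEquiv.toAddMonoidHom)

lemma coeff_Pdelta (hD : IsDerivation D) (F : Subfield E) (hF : ∀ a ∈ F, D a ∈ F)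
    (p : MvPolynomial (Fin n) F) (m : Fin n →₀ ℕ) :
    MvPolynomial.coeff m (Pdelta hD F hF p) = Fder hD F hF (MvPolynomial.coeff m p) :=
  rfl

end Aux
open MvPolynomial Finsupp

lemma coeff_pderiv' {R : Type*} [CommRing R] {σ : Type*} [DecidableEq σ] (i : σ)
    (p : MvPolynomial σ R) (m : σ →₀ ℕ) :
    MvPolynomial.coeff m (MvPolynomial.pderiv i p)
      = ((m i + 1 : ℕ) : R) * MvPolynomial.coeff (m + Finsupp.single i 1) p := by
  induction p using MvPolynomial.induction_on' with
  | monomial s a =>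
    rw [pderiv_monomial, coeff_monomial, coeff_monomial]
    by_cases h : s = m + Finsupp.single i 1
    · subst h
      rw [if_pos (by rw [add_tsub_cancel_right])]
      simp [mul_comm]
    · rw [if_neg h, mul_zero]
      by_cases h2 : s - Finsupp.single i 1 = m
      · have hsi : s i = 0 := by
          by_contra hne
          apply h
          rw [← h2, tsub_add_cancel_of_le]
          rwa [Finsupp.single_le_iff, Nat.one_le_iff_ne_zero]
        rw [if_pos h2, hsi]; simp
      · rw [if_neg h2]
  | add p q hp hq =>
    simp [map_add, hp, hq, add_mul, mul_add]
open MvPolynomial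

section Chain
variable {E : Type*} [Field E] {D : E → E} {n : ℕ}

lemma Pdelta_C (hD : IsDerivation D) (F : Subfield E) (hF : ∀ a ∈ F, D a ∈ F) (a : F) :
    Pdelta (n := n) hD F hF (MvPolynomial.C a) = MvPolynomial.C (Fder hD F hF a) := by
  ext m
  rw [coeff_Pdelta, coeff_C, coeff_C, apply_ite (Fder hD F hF), map_zero]

lemma Pdelta_mul_X (hD : IsDerivation D) (F : Subfield E) (hF : ∀ a ∈ F, D a ∈ F)
    (p : MvPolynomial (Fin n) F) (i : Fin n) :
    Pdelta hD F hF (p * X i) = Pdelta hD F hF p * X i := by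
  ext m
  rw [coeff_Pdelta, coeff_mul_X', coeff_mul_X', apply_ite (Fder hD F hF), map_zero,
    coeff_Pdelta]

lemma chain_rule (hD : IsDerivation D) (F : Subfield E) (hF : ∀ a ∈ F, D a ∈ F)
    (x : Fin n → E) (p : MvPolynomial (Fin n) F) :
    D (MvPolynomial.aeval x p)
      = MvPolynomial.aeval x (Pdelta hD F hF p)
        + ∑ i, D (x i) * MvPolynomial.aeval x (MvPolynomial.pderiv i p) := by
  induction p using MvPolynomial.induction_on with
  | C a =>
    simp only [aeval_C, Pdelta_C, map_zero, MvPolynomial.pderiv_C]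
    have h1 : (algebraMap (↥F) E) a = ↑a := rfl
    have h2 : (algebraMap (↥F) E) (Fder hD F hF a) = ↑(Fder hD F hF a) := rfl
    simp [h1, h2, Fder_coe hD F hF a]
  | add p q hp hq =>
    simp only [map_add, hD.map_add, hp, hq, mul_add, Finset.sum_add_distrib]
    ring
  | mul_X p i hp =>
    rw [map_mul, aeval_X, hD.leibniz, hp, Pdelta_mul_X, map_mul, aeval_X]
    have hps : ∀ j : Fin n, MvPolynomial.pderiv j (p * X i)
        = MvPolynomial.pderiv j p * X i + p * MvPolynomial.pderiv j (X i) :=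
      fun j => MvPolynomial.pderiv_mul
    simp only [hps, map_add, map_mul, aeval_X, mul_add, Finset.sum_add_distrib]
    have : ∑ j : Fin n, D (x j) * (MvPolynomial.aeval x p
        * MvPolynomial.aeval x (MvPolynomial.pderiv j (X i : MvPolynomial (Fin n) F)))
        = D (x i) * MvPolynomial.aeval x p := by
      rw [Finset.sum_eq_single i]
      · rw [MvPolynomial.pderiv_X_self]; simp
      · intro j _ hj
        rw [MvPolynomial.pderiv_X_of_ne (Ne.symm hj)]; simp
      · simp
    rw [this, add_mul, Finset.sum_mul]
    simp only [mul_assoc]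
    ring
end Chain


/-- **Ostrowski's theorem for antiderivatives.**  Let `F` be a characteristic-zero
differential field whose field of constants `C` is algebraically closed, and let
`E ⊇ F` be a no-new-constants differential field extension.  If `x₁, …, xₙ ∈ E`
satisfy `xᵢ' ∈ F`, then either the `xᵢ` are algebraically independent over `F`, or
some nontrivial `C`-linear combination `Σ cᵢ xᵢ` lies in `F`. -/
theorem ostrowski_antiderivatives
    {E : Type*} [Field E] [CharZero E]
    (D : E → E) (hD : IsDerivation D)
    (F : Subfield E) (hF : ∀ a ∈ F, D a ∈ F)
    (C : Subfield E) (hC : ∀ c : E, c ∈ C ↔ (c ∈ F ∧ D c = 0))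
    [IsAlgClosed C]
    (hNNC : ∀ a : E, D a = 0 → a ∈ F)
    {n : ℕ} (x : Fin n → E) (hx : ∀ i, D (x i) ∈ F) :
    AlgebraicIndependent F x ∨
      (∃ c : Fin n → E, (∀ i, c i ∈ C) ∧ c ≠ 0 ∧ (∑ i, c i * x i) ∈ F) := by
  classical
  rw [or_iff_not_imp_left]
  intro hdep
  rw [algebraicIndependent_iff] at hdep
  push_neg at hdep
  obtain ⟨p₁, hp₁0, hp₁ne⟩ := hdep
  -- weight of a monomial
  set w : (Fin n →₀ ℕ) → ℕ := fun m => m.sum fun _ e => e with hw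
  have hw_add : ∀ a b : Fin n →₀ ℕ, w (a + b) = w a + w b :=
    fun a b => Finsupp.sum_add_index' (fun _ => rfl) (fun _ _ _ => rfl)
  have hw_single : ∀ j : Fin n, w (Finsupp.single j 1) = 1 :=
    fun j => Finsupp.sum_single_index rfl
  -- minimization
  have hex : ∃ k, ∃ p : MvPolynomial (Fin n) F,
      MvPolynomial.aeval x p = 0 ∧ p ≠ 0 ∧ p.totalDegree = k :=
    ⟨_, p₁, hp₁0, hp₁ne, rfl⟩
  set d := Nat.find hex with hd
  obtain ⟨p₂, hp₂0, hp₂ne, hp₂deg⟩ := Nat.find_spec hex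
  have hdmin : ∀ p : MvPolynomial (Fin n) F, MvPolynomial.aeval x p = 0 → p ≠ 0 →
      d ≤ p.totalDegree := fun p h1 h2 => Nat.find_min' hex ⟨p, h1, h2, rfl⟩
  have hex2 : ∃ k, ∃ p : MvPolynomial (Fin n) F,
      MvPolynomial.aeval x p = 0 ∧ p ≠ 0 ∧ p.totalDegree = d ∧
        (p.support.filter fun m => w m = d).card = k :=
    ⟨_, p₂, hp₂0, hp₂ne, hp₂deg, rfl⟩
  set t := Nat.find hex2 with ht
  obtain ⟨p₀, h00, h0ne, h0deg, h0top⟩ := Nat.find_spec hex2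
  have htmin : ∀ p : MvPolynomial (Fin n) F, MvPolynomial.aeval x p = 0 → p ≠ 0 →
      p.totalDegree = d → t ≤ (p.support.filter fun m => w m = d).card :=
    fun p h1 h2 h3 => Nat.find_min' hex2 ⟨p, h1, h2, h3, rfl⟩
  -- normalize the leading coefficient
  obtain ⟨μ, hμmem, hμsup⟩ :=
    Finset.exists_mem_eq_sup p₀.support (MvPolynomial.support_nonempty.2 h0ne)
      (fun m => m.sum fun _ e => e)
  have hb : MvPolynomial.coeff μ p₀ ≠ 0 := MvPolynomial.mem_support_iff.1 hμmem
  set b := MvPolynomial.coeff μ p₀ with hbdef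
  set p : MvPolynomial (Fin n) F := b⁻¹ • p₀ with hpdef
  have hsupp : p.support = p₀.support :=
    MvPolynomial.support_smul_eq (inv_ne_zero hb) p₀
  have hp0 : MvPolynomial.aeval x p = 0 := by
    rw [hpdef, map_smul, h00, smul_zero]
  have hpμ : MvPolynomial.coeff μ p = 1 := by
    rw [hpdef, MvPolynomial.coeff_smul, ← hbdef, smul_eq_mul, inv_mul_cancel₀ hb]
  have hpne : p ≠ 0 := fun h => by simp [h] at hpμ
  have hdeg : p.totalDegree = d := by
    rw [MvPolynomial.totalDegree, hsupp, ← MvPolynomial.totalDegree]; exact h0deg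
  have htop : (p.support.filter fun m => w m = d).card = t := by
    rw [hsupp]; exact h0top
  have hμd : w μ = d := by
    show (μ.sum fun _ e => e) = d
    rw [← hμsup]
    exact h0deg
  -- the derived polynomial Q
  set u : Fin n → F := fun j => ⟨D (x j), hx j⟩ with hu
  set Q : MvPolynomial (Fin n) F :=
    Pdelta hD F hF p + ∑ j, MvPolynomial.C (u j) * MvPolynomial.pderiv j p with hQ
  have hQcoeff : ∀ m : Fin n →₀ ℕ, MvPolynomial.coeff m Q
      = Fder hD F hF (MvPolynomial.coeff m p)
        + ∑ j, u j * (((m j + 1 : ℕ) : F)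
            * MvPolynomial.coeff (m + Finsupp.single j 1) p) := by
    intro m
    rw [hQ, MvPolynomial.coeff_add, coeff_Pdelta, MvPolynomial.coeff_sum]
    congr 1
    refine Finset.sum_congr rfl fun j _ => ?_
    rw [MvPolynomial.coeff_C_mul, coeff_pderiv']
  have hQaeval : MvPolynomial.aeval x Q = 0 := by
    have : MvPolynomial.aeval x Q = D (MvPolynomial.aeval x p) := by
      rw [chain_rule hD F hF x p, hQ, map_add, map_sum]
      congr 1
      refine Finset.sum_congr rfl fun j _ => ?_
      rw [map_mul, MvPolynomial.aeval_C]
      rfl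
    rw [this, hp0, hD.zero]
  have hhigh : ∀ m : Fin n →₀ ℕ, d < w m → MvPolynomial.coeff m p = 0 := by
    intro m hm
    exact MvPolynomial.coeff_eq_zero_of_totalDegree_lt (by rw [hdeg]; exact hm)
  have hQhigh : ∀ m : Fin n →₀ ℕ, d < w m → MvPolynomial.coeff m Q = 0 := by
    intro m hm
    rw [hQcoeff m, hhigh m hm, map_zero, zero_add]
    refine Finset.sum_eq_zero fun j _ => ?_
    rw [hhigh (m + Finsupp.single j 1) (by rw [hw_add, hw_single]; omega), mul_zero, mul_zero]
  have hQtop : ∀ m : Fin n →₀ ℕ, w m = d →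
      MvPolynomial.coeff m Q = Fder hD F hF (MvPolynomial.coeff m p) := by
    intro m hm
    rw [hQcoeff m]
    have : ∀ j : Fin n, MvPolynomial.coeff (m + Finsupp.single j 1) p = 0 := fun j =>
      hhigh _ (by rw [hw_add, hw_single]; omega)
    simp [this]
  have hQ0 : Q = 0 := by
    by_contra hQne
    have hQdeg : Q.totalDegree ≤ d := by
      rw [MvPolynomial.totalDegree]
      refine Finset.sup_le fun m hm => ?_
      by_contra hlt
      push_neg at hlt
      exact (MvPolynomial.mem_support_iff.1 hm) (hQhigh m hlt)
    have hQdeg' : Q.totalDegree = d := le_antisymm hQdeg (hdmin Q hQaeval hQne)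
    have hμfil : μ ∈ p.support.filter fun m => w m = d := by
      refine Finset.mem_filter.2 ⟨MvPolynomial.mem_support_iff.2 ?_, hμd⟩
      rw [hpμ]; exact one_ne_zero
    have hsub : (Q.support.filter fun m => w m = d)
        ⊆ (p.support.filter fun m => w m = d).erase μ := by
      intro m hm
      obtain ⟨hm1, hm2⟩ := Finset.mem_filter.1 hm
      have hne : MvPolynomial.coeff m Q ≠ 0 := MvPolynomial.mem_support_iff.1 hm1
      rw [hQtop m hm2] at hne
      refine Finset.mem_erase.2 ⟨?_, Finset.mem_filter.2
        ⟨MvPolynomial.mem_support_iff.2 (fun h => hne (by rw [h, map_zero])), hm2⟩⟩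
      rintro rfl
      apply hne
      rw [hpμ]
      exact Subtype.ext hD.one
    have h1 : t ≤ (Q.support.filter fun m => w m = d).card := htmin Q hQaeval hQne hQdeg'
    have h2 := Finset.card_le_card hsub
    rw [Finset.card_erase_of_mem hμfil, htop] at h2
    have h3 : 1 ≤ t := by
      rw [← htop]
      exact Finset.card_pos.2 ⟨μ, hμfil⟩
    omega
  -- degree is positive
  have hd1 : 1 ≤ d := by
    by_contra hd0
    push_neg at hd0
    have hd0' : d = 0 := by omega
    have hall := (MvPolynomial.totalDegree_eq_zero_iff (Fin n) p).1 (by rw [hdeg, hd0'])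
    have hμ0 : μ = 0 := by
      ext j
      exact hall μ (by rw [hsupp]; exact hμmem) j
    have hsup1 : p.support = {0} := by
      apply Finset.Subset.antisymm
      · intro m hm
        have : m = 0 := by ext j; exact hall m hm j
        simp [this]
      · intro m hm
        rw [Finset.mem_singleton] at hm
        subst hm
        rw [← hμ0, hsupp]; exact hμmem
    have hpC : p = MvPolynomial.C (MvPolynomial.coeff 0 p) := by
      conv_lhs => rw [p.as_sum, hsup1]
      rw [Finset.sum_singleton, MvPolynomial.monomial_zero']
    rw [hpC] at hp0
    rw [MvPolynomial.aeval_C] at hp0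
    have : MvPolynomial.coeff 0 p = 0 := by
      have := (map_eq_zero_iff _ (algebraMap (↥F) E).injective).1 hp0
      exact this
    rw [this, map_zero] at hpC
    exact hpne hpC
  -- find i with μ i ≠ 0
  have hμne : μ.support.Nonempty := by
    rw [Finsupp.support_nonempty_iff]
    intro h
    rw [h] at hμd
    simp [hw, Finsupp.sum_zero_index] at hμd
    omega
  obtain ⟨i, hi⟩ := hμne
  have hμi : μ i ≠ 0 := Finsupp.mem_support_iff.1 hi
  set m : Fin n →₀ ℕ := μ - Finsupp.single i 1 with hm
  have hmadd : m + Finsupp.single i 1 = μ :=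
    tsub_add_cancel_of_le (Finsupp.single_le_iff.2 (Nat.one_le_iff_ne_zero.2 hμi))
  have hwm : w m + 1 = d := by
    rw [← hμd, ← hmadd, hw_add, hw_single]
  -- top coefficients are constants
  have hconst : ∀ j : Fin n,
      D ((MvPolynomial.coeff (m + Finsupp.single j 1) p : F) : E) = 0 := by
    intro j
    have hwj : w (m + Finsupp.single j 1) = d := by rw [hw_add, hw_single]; omega
    have := hQtop _ hwj
    rw [hQ0, MvPolynomial.coeff_zero] at this
    have := congrArg (Subtype.val) this
    simpa using this.symm
  -- define c
  set c : Fin n → E := fun j =>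
    ((m j + 1 : ℕ) : E) * ((MvPolynomial.coeff (m + Finsupp.single j 1) p : F) : E) with hc
  have hcC : ∀ j, c j ∈ C := by
    intro j
    rw [hC]
    constructor
    · exact F.mul_mem (natCast_mem F _) (MvPolynomial.coeff (m + Finsupp.single j 1) p).2
    · rw [hc]
      rw [hD.leibniz, hD.natCast, hconst j, zero_mul, mul_zero, add_zero]
  have hcne : c ≠ 0 := by
    intro h
    have hci := congrFun h i
    rw [hc] at hci
    simp only at hci
    rw [hmadd, hpμ] at hci
    simp only [OneMemClass.coe_one, mul_one, Pi.zero_apply] at hci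
    exact Nat.cast_ne_zero.2 (Nat.succ_ne_zero (m i)) hci
  -- the linear combination lies in F
  have heq : D (((MvPolynomial.coeff m p : ↥F) : E) + ∑ j, c j * x j) = 0 := by
    have hkey := hQcoeff m
    rw [hQ0, MvPolynomial.coeff_zero] at hkey
    have hkeyE := congrArg (Subtype.val) hkey.symm
    push_cast at hkeyE
    -- hkeyE : D (coeff m p) + ∑ j, D (x j) * ((m j + 1) * coeff (m+e_j) p) = 0
    have hDsum : D (∑ j, c j * x j) = ∑ j, c j * D (x j) :=
      calc D (∑ j, c j * x j) = hD.addHom (∑ j, c j * x j) := rfl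
        _ = ∑ j, hD.addHom (c j * x j) := map_sum _ _ _
        _ = ∑ j, c j * D (x j) := Finset.sum_congr rfl fun j _ => by
            show D (c j * x j) = c j * D (x j)
            rw [hD.leibniz, ((hC (c j)).1 (hcC j)).2, zero_mul, zero_add]
    rw [hD.map_add, hDsum]
    rw [← hkeyE]
    congr 1
    refine Finset.sum_congr rfl fun j _ => ?_
    rw [hc]
    push_cast
    ring
  have hmem := hNNC _ heq
  refine ⟨c, hcC, hcne, ?_⟩
  have : (∑ j, c j * x j) =
      (((MvPolynomial.coeff m p : ↥F) : E) + ∑ j, c j * x j) - ((MvPolynomial.coeff m p : ↥F) : E) := by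
    ring
  rw [this]
  exact F.sub_mem hmem (MvPolynomial.coeff m p).2
end

section
/- Let F be a characteristic-zero differential field whose field of constants is algebraically closed, and let E ⊇ F be a differential field extension. If e ∈ E is nonzero and e′/e ∈ F, then either e is transcendental over F or there exists a positive integer n such that e^n ∈ F. -/
section Aux

variable {E : Type*} [Field E] {D : E → E}

private lemma IsDerivation.dzero (hD : IsDerivation D) : D 0 = 0 := by
  have := hD.map_add 0 0
  simpa using this.symm

private lemma IsDerivation.done (hD : IsDerivation D) : D 1 = 0 := by
  have := hD.leibniz 1 1
  simp only [one_mul, mul_one] at this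
  exact (left_eq_add.mp this)

private lemma IsDerivation.dsum (hD : IsDerivation D) {ι : Type*} (s : Finset ι) (f : ι → E) :
    D (∑ i ∈ s, f i) = ∑ i ∈ s, D (f i) :=
  map_sum (AddMonoidHom.mk' D hD.map_add) f s

private lemma IsDerivation.dpow (hD : IsDerivation D) {e t : E} (h : D e = t * e) :
    ∀ k : ℕ, D (e ^ k) = (k : E) * t * e ^ k
  | 0 => by simpa using hD.done
  | (k + 1) => by
      rw [pow_succ, hD.leibniz, hD.dpow h k, h]
      push_cast
      ring

private lemma IsDerivation.dinv (hD : IsDerivation D) {x : E} (hx : x ≠ 0) :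
    D x⁻¹ = -(D x) / x ^ 2 := by
  have h1 : D (x * x⁻¹) = 0 := by rw [mul_inv_cancel₀ hx]; exact hD.done
  rw [hD.leibniz] at h1
  field_simp at h1 ⊢
  linear_combination h1

private lemma smul_coe (F : Subfield E) (a : F) (x : E) : a • x = (a : E) * x := by
  rw [Algebra.smul_def]; rfl

private lemma algebraMap_coe (F : Subfield E) (a : F) : algebraMap F E a = (a : E) := rfl

/-- Coefficient of a sum `∑ C (f k) * X ^ k`. -/
private lemma coeff_sum_C_X {R : Type*} [Semiring R] (f : ℕ → R) (N j : ℕ) :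
    (∑ k ∈ Finset.range N, Polynomial.C (f k) * Polynomial.X ^ k).coeff j
      = if j < N then f j else 0 := by
  rw [Polynomial.finset_sum_coeff]
  simp only [Polynomial.coeff_C_mul, Polynomial.coeff_X_pow, mul_ite, mul_one, mul_zero]
  rw [Finset.sum_ite_eq (Finset.range N) j f]
  simp [Finset.mem_range]

/-- `aeval` of a sum `∑ C (f k) * X ^ k` over a subfield. -/
private lemma aeval_sum_C_X (F : Subfield E) (f : ℕ → F) (N : ℕ) (x : E) :
    Polynomial.aeval x (∑ k ∈ Finset.range N, Polynomial.C (f k) * Polynomial.X ^ k)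
      = ∑ k ∈ Finset.range N, (f k : E) * x ^ k := by
  rw [map_sum]
  simp [algebraMap_coe]

/-- A polynomial over `F` of degree lower than the minimal polynomial of `x`
which vanishes at `x` is zero. -/
private lemma eq_zero_of_small (F : Subfield E) {x : E} {s : Polynomial F}
    (hs : Polynomial.aeval x s = 0)
    (hdeg : ∀ k, (minpoly F x).natDegree ≤ k → s.coeff k = 0) : s = 0 := by
  by_contra h
  have hdvd := minpoly.dvd F x hs
  have hle := Polynomial.natDegree_le_of_dvd hdvd h
  exact h (Polynomial.leadingCoeff_eq_zero.mp (hdeg s.natDegree hle))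

/-- An element integral over an algebraically closed subfield belongs to it. -/
private lemma mem_of_isIntegral_isAlgClosed (K : Subfield E) [IsAlgClosed K] {x : E}
    (hx : IsIntegral K x) : x ∈ K := by
  have h1 : (minpoly K x).degree = 1 :=
    IsAlgClosed.degree_eq_one_of_irreducible K (minpoly.irreducible hx)
  have hq : (minpoly K x).leadingCoeff = 1 := minpoly.monic hx
  have h0 : Polynomial.aeval x (minpoly K x) = 0 := minpoly.aeval K x
  rw [Polynomial.eq_X_add_C_of_degree_eq_one h1, hq, Polynomial.C_1, one_mul,
    Polynomial.aeval_add, Polynomial.aeval_X, Polynomial.aeval_C, add_eq_zero_iff_eq_neg] at h0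
  rw [h0]
  exact neg_mem (SetLike.coe_mem _)

/-- A constant of `E` which is integral over `F` lies in the (algebraically closed)
field of constants `C`. -/
private lemma const_mem (hD : IsDerivation D) (F : Subfield E) (hF : ∀ a ∈ F, D a ∈ F)
    (C : Subfield E) (hC : ∀ c : E, c ∈ C ↔ (c ∈ F ∧ D c = 0)) [IsAlgClosed C]
    {c : E} (hint : IsIntegral F c) (hc : D c = 0) : c ∈ C := by
  set r := minpoly F c with hr
  set m := r.natDegree with hm
  have h0 : ∑ k ∈ Finset.range (m + 1), ((r.coeff k : E)) * c ^ k = 0 := by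
    have := minpoly.aeval F c
    rw [Polynomial.aeval_eq_sum_range' (lt_add_one m) c] at this
    simpa only [smul_coe] using this
  -- all coefficients of the minimal polynomial are constants
  have key : ∀ k, D ((r.coeff k : E)) = 0 := by
    set s : Polynomial F :=
      ∑ k ∈ Finset.range (m + 1),
        Polynomial.C (⟨D ((r.coeff k : E)), hF _ (SetLike.coe_mem _)⟩ : F) * Polynomial.X ^ k
      with hsdef
    have haev : Polynomial.aeval c s = 0 := by
      rw [hsdef, aeval_sum_C_X]
      have hd := congrArg D h0
      rw [hD.dsum, hD.dzero] at hd
      rw [← hd]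
      refine Finset.sum_congr rfl fun k _ => ?_
      rw [hD.leibniz]
      have hck : D (c ^ k) = 0 := by
        have := hD.dpow (t := 0) (by rw [hc, zero_mul]) k
        simpa using this
      rw [hck, mul_zero, add_zero]
    have hs0 : s = 0 := by
      refine eq_zero_of_small F haev fun k hk => ?_
      rw [hsdef, coeff_sum_C_X]
      rcases lt_or_ge k (m + 1) with h | h
      · have hkm : k = m := le_antisymm (Nat.lt_succ_iff.mp h) hk
        rw [if_pos h]
        ext
        have h1 : r.coeff k = 1 := by
          rw [hkm]; exact (minpoly.monic hint).coeff_natDegree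
        rw [h1]
        simpa using hD.done
      · rw [if_neg (not_lt.mpr h)]
    intro k
    rcases lt_or_ge k (m + 1) with h | h
    · have := congrArg (fun p => Polynomial.coeff p k) hs0
      simp only [hsdef, coeff_sum_C_X, if_pos h, Polynomial.coeff_zero] at this
      exact congrArg Subtype.val this
    · have : r.coeff k = 0 :=
        Polynomial.coeff_eq_zero_of_natDegree_lt (by omega)
      rw [this]
      simpa using hD.dzero
  have hmemC : ∀ k, ((r.coeff k : E)) ∈ C := fun k =>
    (hC _).mpr ⟨SetLike.coe_mem _, key k⟩
  -- build the corresponding polynomial over C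
  set rC : Polynomial C :=
    ∑ k ∈ Finset.range (m + 1),
      Polynomial.C (⟨(r.coeff k : E), hmemC k⟩ : C) * Polynomial.X ^ k with hrC
  have hcoeffC : ∀ j, rC.coeff j = if j < m + 1 then (⟨(r.coeff j : E), hmemC j⟩ : C) else 0 :=
    fun j => by rw [hrC, coeff_sum_C_X]
  have hdegC : rC.natDegree = m := by
    apply le_antisymm
    · refine Polynomial.natDegree_le_iff_coeff_eq_zero.mpr fun N hN => ?_
      rw [hcoeffC, if_neg (by omega)]
    · apply Polynomial.le_natDegree_of_ne_zero
      rw [hcoeffC, if_pos (lt_add_one m)]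
      intro h
      have h2 : ((r.coeff m : E)) = ((0 : C) : E) := congrArg Subtype.val h
      have h1 : r.coeff m = 1 := (minpoly.monic hint).coeff_natDegree
      rw [h1] at h2
      simp at h2
  have hmonic : rC.Monic := by
    unfold Polynomial.Monic Polynomial.leadingCoeff
    rw [hdegC, hcoeffC, if_pos (lt_add_one m)]
    ext
    have h1 : r.coeff m = 1 := (minpoly.monic hint).coeff_natDegree
    simp [h1]
  have haevC : Polynomial.aeval c rC = 0 := by
    rw [hrC, map_sum]
    simp only [map_mul, Polynomial.aeval_C, map_pow, Polynomial.aeval_X, algebraMap_coe]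
    exact h0
  have hintC : IsIntegral C c :=
    ⟨rC, hmonic, by rwa [← Polynomial.aeval_def]⟩
  exact mem_of_isIntegral_isAlgClosed C hintC

end Aux

/-- Let `F` be a characteristic-zero differential field whose field of constants is
algebraically closed, and let `E ⊇ F` be a differential field extension.  If `e ∈ E`
is nonzero and `e'/e ∈ F`, then either `e` is transcendental over `F` or some positive
power `e^n` lies in `F`. -/
theorem exponential_transcendental_or_power_mem
    {E : Type*} [Field E] [CharZero E]
    (D : E → E) (hD : IsDerivation D)
    (F : Subfield E) (hF : ∀ a ∈ F, D a ∈ F)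
    (C : Subfield E) (hC : ∀ c : E, c ∈ C ↔ (c ∈ F ∧ D c = 0))
    [IsAlgClosed C]
    (e : E) (he0 : e ≠ 0) (he : D e / e ∈ F) :
    Transcendental F e ∨ ∃ n : ℕ, 0 < n ∧ e ^ n ∈ F := by
  refine or_iff_not_imp_left.mpr fun htr => ?_
  have halg : IsAlgebraic F e := not_not.mp htr
  have hint : IsIntegral F e := halg.isIntegral
  set t : E := D e / e with ht
  have hDe : D e = t * e := (div_mul_cancel₀ (D e) he0).symm
  set p := minpoly F e with hp
  set n := p.natDegree with hn
  have hn0 : 0 < n := minpoly.natDegree_pos hint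
  have h0 : ∑ k ∈ Finset.range (n + 1), ((p.coeff k : E)) * e ^ k = 0 := by
    have := minpoly.aeval F e
    rw [Polynomial.aeval_eq_sum_range' (lt_add_one n) e] at this
    simpa only [smul_coe] using this
  have h1 : ∑ k ∈ Finset.range (n + 1),
      (D ((p.coeff k : E)) + (k : E) * t * (p.coeff k : E)) * e ^ k = 0 := by
    have hd := congrArg D h0
    rw [hD.dsum, hD.dzero] at hd
    rw [← hd]
    refine Finset.sum_congr rfl fun k _ => ?_
    rw [hD.leibniz, hD.dpow hDe k]
    ring
  have hbmem : ∀ k : ℕ,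
      D ((p.coeff k : E)) + ((k : E) - (n : E)) * t * (p.coeff k : E) ∈ F := fun k =>
    add_mem (hF _ (SetLike.coe_mem _))
      (mul_mem (mul_mem (sub_mem (natCast_mem F k) (natCast_mem F n)) he)
        (SetLike.coe_mem _))
  set q : Polynomial F :=
    ∑ k ∈ Finset.range (n + 1),
      Polynomial.C (⟨_, hbmem k⟩ : F) * Polynomial.X ^ k with hq
  have haq : Polynomial.aeval e q = 0 := by
    rw [hq, aeval_sum_C_X]
    have expand : ∀ k ∈ Finset.range (n + 1),
        (((⟨_, hbmem k⟩ : F) : E)) * e ^ k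
          = (D ((p.coeff k : E)) + (k : E) * t * (p.coeff k : E)) * e ^ k
            - (n : E) * t * (((p.coeff k : E)) * e ^ k) := by
      intro k _
      show (D ((p.coeff k : E)) + ((k : E) - (n : E)) * t * (p.coeff k : E)) * e ^ k = _
      ring
    rw [Finset.sum_congr rfl expand, Finset.sum_sub_distrib, h1, ← Finset.mul_sum, h0,
      mul_zero, sub_zero]
  have hq0 : q = 0 := by
    refine eq_zero_of_small F haq fun k hk => ?_
    rw [hq, coeff_sum_C_X]
    rcases lt_or_ge k (n + 1) with h | h
    · rw [if_pos h]
      have hkm : k = n := le_antisymm (Nat.lt_succ_iff.mp h) hk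
      ext
      show D ((p.coeff k : E)) + ((k : E) - (n : E)) * t * (p.coeff k : E) = 0
      have h1' : p.coeff k = 1 := by
        rw [hkm]; exact (minpoly.monic hint).coeff_natDegree
      rw [h1', hkm]
      simp [hD.done]
    · rw [if_neg (not_lt.mpr h)]
  have hb0 : D ((p.coeff 0 : E)) = (n : E) * t * (p.coeff 0 : E) := by
    have hc0 := congrArg (fun r => Polynomial.coeff r 0) hq0
    simp only [hq, coeff_sum_C_X, if_pos (Nat.succ_pos n), Polynomial.coeff_zero] at hc0
    have h2 : D ((p.coeff 0 : E)) + (((0 : ℕ) : E) - (n : E)) * t * (p.coeff 0 : E)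
        = ((0 : F) : E) := congrArg Subtype.val hc0
    push_cast at h2
    linear_combination h2
  have ha0 : ((p.coeff 0 : E)) ≠ 0 := by
    have h3 := minpoly.coeff_zero_ne_zero hint he0
    exact fun h => h3 (by exact_mod_cast h)
  set c : E := e ^ n * ((p.coeff 0 : E))⁻¹ with hcdef
  have hDc : D c = 0 := by
    rw [hcdef, hD.leibniz, hD.dpow hDe n, hD.dinv ha0, hb0]
    field_simp
    ring
  have hcint : IsIntegral F c := by
    apply (hint.pow n).mul
    exact isIntegral_algebraMap (x := (⟨((p.coeff 0 : E))⁻¹,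
      inv_mem (SetLike.coe_mem _)⟩ : F))
  have hcC : c ∈ C := const_mem hD F hF C hC hcint hDc
  have hcF : c ∈ F := ((hC c).mp hcC).1
  refine ⟨n, hn0, ?_⟩
  have hen : e ^ n = c * (p.coeff 0 : E) := by
    rw [hcdef]; field_simp
  rw [hen]
  exact mul_mem hcF (SetLike.coe_mem _)
end

section
/- Let R be an integral domain containing ℚ (i.e. a ℚ-algebra that is an integral domain), let P ∈ R[y_1,…,y_n] be a polynomial in n variables, let r_1,…,r_n ∈ R, and let P̃ := P(y_1+r_1,…,y_n+r_n) be the translate of P. If P divides P̃ in R[y_1,…,y_n], then P̃ = P; moreover, for every j, the homogeneous component H_j of P of total degree j satisfies Σ_{i=1}^n r_i·(∂H_j/∂y_i) = 0, and in particular H_j(y_1+r_1,…,y_n+r_n) = H_j for every j and Σ_{i=1}^n r_i·(∂P/∂y_i) = 0. -/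
open MvPolynomial

section Aux

variable {R : Type*} [CommRing R] {n : ℕ}

/-- The translation substitution as an algebra hom. -/
noncomputable def trAux (r : Fin n → R) :
    MvPolynomial (Fin n) R →ₐ[R] MvPolynomial (Fin n) R :=
  aeval fun i => X i + C (r i)

/-- `Q(y + t r)` as a polynomial in `t` over `R[y]`. -/
noncomputable def psiAux (r : Fin n → R) :
    MvPolynomial (Fin n) R →ₐ[R] Polynomial (MvPolynomial (Fin n) R) :=
  aeval fun i => Polynomial.C (X i) + Polynomial.X * Polynomial.C (C (r i))

lemma psiAux_eval_zero (r : Fin n → R) (Q : MvPolynomial (Fin n) R) :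
    (psiAux r Q).eval 0 = Q := by
  have h : (Polynomial.evalRingHom (0 : MvPolynomial (Fin n) R)).comp
      (psiAux r).toRingHom = RingHom.id _ := by
    apply MvPolynomial.ringHom_ext <;> intro a <;>
      simp [psiAux, MvPolynomial.algebraMap_eq, Polynomial.algebraMap_apply]
  exact RingHom.congr_fun h Q

lemma psiAux_eval_one (r : Fin n → R) (Q : MvPolynomial (Fin n) R) :
    (psiAux r Q).eval 1 = trAux r Q := by
  have h : (Polynomial.evalRingHom (1 : MvPolynomial (Fin n) R)).comp
      (psiAux r).toRingHom = (trAux r).toRingHom := by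
    apply MvPolynomial.ringHom_ext <;> intro a <;>
      simp [psiAux, trAux, MvPolynomial.algebraMap_eq, Polynomial.algebraMap_apply]
  exact RingHom.congr_fun h Q

lemma psiAux_injective (r : Fin n → R) : Function.Injective (psiAux r) := by
  intro a b h
  have := congrArg (Polynomial.eval (0 : MvPolynomial (Fin n) R)) h
  rwa [psiAux_eval_zero, psiAux_eval_zero] at this

lemma psiAux_trAux (r : Fin n → R) (Q : MvPolynomial (Fin n) R) :
    psiAux r (trAux r Q) = (psiAux r Q).comp (Polynomial.X + 1) := by
  have h : ((Polynomial.compRingHom (Polynomial.X + 1)).comp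
      (psiAux r).toRingHom) = ((psiAux r).toRingHom.comp (trAux r).toRingHom) := by
    apply MvPolynomial.ringHom_ext
    · intro a
      simp [psiAux, trAux, MvPolynomial.algebraMap_eq, Polynomial.algebraMap_apply]
    · intro i
      simp only [RingHom.comp_apply, AlgHom.toRingHom_eq_coe, RingHom.coe_coe,
        Polynomial.coe_compRingHom_apply, psiAux, trAux, aeval_X, map_add]
      simp [psiAux, trAux, MvPolynomial.algebraMap_eq, Polynomial.algebraMap_apply,
        Polynomial.add_comp, Polynomial.mul_comp, Polynomial.C_comp, Polynomial.X_comp]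
      ring
  exact (RingHom.congr_fun h Q).symm

lemma trAux_injective (r : Fin n → R) : Function.Injective (trAux r) := by
  intro a b h
  have hcomp : (trAux (fun i => -r i)).comp (trAux r) = AlgHom.id R _ := by
    apply MvPolynomial.algHom_ext
    intro i
    simp [trAux]
  have := congrArg (trAux (fun i => -r i)) h
  rwa [← AlgHom.comp_apply, ← AlgHom.comp_apply, hcomp, AlgHom.id_apply, AlgHom.id_apply] at this

lemma derivative_psiAux (r : Fin n → R) (Q : MvPolynomial (Fin n) R) :
    Polynomial.derivative (psiAux r Q) = psiAux r (∑ i, C (r i) * pderiv i Q) := by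
  induction Q using MvPolynomial.induction_on with
  | C a => simp [psiAux, MvPolynomial.algebraMap_eq, Polynomial.algebraMap_apply, pderiv_C]
  | add p q hp hq =>
      simp only [map_add, Polynomial.derivative_add, hp, hq, mul_add, Finset.sum_add_distrib]
  | mul_X p i hp =>
      have hD : (∑ j, C (r j) * pderiv j (p * X i))
          = (∑ j, C (r j) * pderiv j p) * X i + C (r i) * p := by
        have h1 : ∀ j, C (r j) * pderiv j (p * X i)
            = C (r j) * pderiv j p * X i + C (r j) * (p * pderiv j (X i)) := by
          intro j
          rw [pderiv_mul]
          ring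
        rw [Finset.sum_congr rfl fun j _ => h1 j, Finset.sum_add_distrib, Finset.sum_mul]
        congr 1
        rw [Finset.sum_eq_single i]
        · simp
        · intro j _ hji
          simp [pderiv_X_of_ne (Ne.symm hji)]
        · simp
      have hXi : psiAux r (X i) = Polynomial.C (X i) + Polynomial.X * Polynomial.C (C (r i)) := by
        simp [psiAux]
      have hCri : psiAux r (C (r i)) = Polynomial.C (C (r i)) := by
        simp [psiAux, MvPolynomial.algebraMap_eq, Polynomial.algebraMap_apply]
      rw [map_mul (psiAux r), hXi, Polynomial.derivative_mul, hp, hD]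
      simp only [map_add, map_mul, hXi, hCri, Polynomial.derivative_add,
        Polynomial.derivative_C, Polynomial.derivative_mul,
        Polynomial.derivative_X, zero_add, one_mul, mul_zero, add_zero, zero_mul, mul_one]
      ring

lemma pderiv_homogeneousComponent (i : Fin n) (j : ℕ) (Q : MvPolynomial (Fin n) R) :
    pderiv i (homogeneousComponent (j + 1) Q) = homogeneousComponent j (pderiv i Q) := by
  classical
  induction Q using MvPolynomial.induction_on' with
  | add p q hp hq => simp only [map_add, hp, hq]
  | monomial s a =>
    have hmem : (monomial s a : MvPolynomial (Fin n) R)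
        ∈ homogeneousSubmodule (Fin n) R s.degree :=
      (mem_homogeneousSubmodule _ _).mpr (isHomogeneous_monomial a rfl)
    rw [homogeneousComponent_of_mem hmem, pderiv_monomial]
    have hmem2 : (monomial (s - Finsupp.single i 1) (a * s i) : MvPolynomial (Fin n) R)
        ∈ homogeneousSubmodule (Fin n) R (s - Finsupp.single i 1).degree :=
      (mem_homogeneousSubmodule _ _).mpr (isHomogeneous_monomial _ rfl)
    rw [homogeneousComponent_of_mem hmem2]
    by_cases h0 : s i = 0
    · split_ifs <;> simp [h0, pderiv_monomial]
    · have hs : s = (s - Finsupp.single i 1) + Finsupp.single i 1 := by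
        ext k
        by_cases hk : k = i
        · subst hk
          simp [Finsupp.single_apply]
          omega
        · simp [Finsupp.single_apply, hk, Ne.symm hk]
      have hsum : ∀ f : Fin n →₀ ℕ, f.degree = ∑ k, f k := by
        intro f
        exact Finset.sum_subset (Finset.subset_univ _)
          (fun x _ hx => by simpa using Finsupp.notMem_support_iff.mp hx)
      have hdeg : s.degree = (s - Finsupp.single i 1).degree + 1 := by
        rw [hsum, hsum]
        conv_lhs => rw [hs]
        simp only [Finsupp.add_apply]
        rw [Finset.sum_add_distrib]
        congr 1
        rw [Finset.sum_eq_single i]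
        · simp
        · intro j _ h
          simp [Finsupp.single_eq_of_ne h]
        · simp
      split_ifs with h1 h2 h2
      · rw [pderiv_monomial]
      · omega
      · omega
      · simp
end Aux

/-- Let `R` be an integral domain containing `ℚ`, let `P ∈ R[y₁,…,yₙ]`, let
`r₁, …, rₙ ∈ R`, and let `P̃ := P(y₁ + r₁, …, yₙ + rₙ)` be the translate of `P`.
If `P` divides `P̃`, then `P̃ = P`; moreover every homogeneous component `Hⱼ` of `P`
satisfies `Σᵢ rᵢ · ∂Hⱼ/∂yᵢ = 0`, and in particular each `Hⱼ` is invariant under the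
translation and `Σᵢ rᵢ · ∂P/∂yᵢ = 0`. -/
theorem translate_dvd_self_eq
    {R : Type*} [CommRing R] [IsDomain R] [Algebra ℚ R]
    {n : ℕ} (P : MvPolynomial (Fin n) R) (r : Fin n → R)
    (hdvd : P ∣ (aeval fun i => (X i + C (r i) : MvPolynomial (Fin n) R)) P) :
    (aeval fun i => (X i + C (r i) : MvPolynomial (Fin n) R)) P = P ∧
    (∀ j : ℕ, ∑ i, C (r i) * pderiv i (homogeneousComponent j P) = 0) ∧
    (∀ j : ℕ, (aeval fun i => (X i + C (r i) : MvPolynomial (Fin n) R))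
        (homogeneousComponent j P) = homogeneousComponent j P) ∧
    ∑ i, C (r i) * pderiv i P = 0 := by
  classical
  haveI hCR : CharZero R := charZero_of_injective_algebraMap (algebraMap ℚ R).injective
  haveI hCM : CharZero (MvPolynomial (Fin n) R) :=
    ⟨fun a b h => Nat.cast_injective (R := R)
      (MvPolynomial.C_injective (Fin n) R (by simpa using h))⟩
  haveI : NoZeroSMulDivisors ℕ (MvPolynomial (Fin n) R) := by
    constructor
    intro c x h
    rw [nsmul_eq_mul] at h
    rcases mul_eq_zero.mp h with h | h
    · left; exact_mod_cast h
    · right; exact h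
  -- key facts about homogeneous components, valid regardless of hdvd
  have hcomp2 : ∀ Q : MvPolynomial (Fin n) R,
      (∑ i, C (r i) * pderiv i Q = 0) →
      ∀ j : ℕ, ∑ i, C (r i) * pderiv i (homogeneousComponent j Q) = 0 := by
    intro Q hQ j
    cases j with
    | zero => simp [homogeneousComponent_zero, pderiv_C]
    | succ k =>
        have : ∀ i : Fin n, C (r i) * pderiv i (homogeneousComponent (k + 1) Q)
            = homogeneousComponent k (C (r i) * pderiv i Q) := by
          intro i
          rw [pderiv_homogeneousComponent, homogeneousComponent_C_mul]
        rw [Finset.sum_congr rfl fun i _ => this i, ← map_sum, hQ, map_zero]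
  have hinv : ∀ Q : MvPolynomial (Fin n) R,
      (∑ i, C (r i) * pderiv i Q = 0) → trAux r Q = Q := by
    intro Q hQ
    have hder : Polynomial.derivative (psiAux r Q) = 0 := by
      rw [derivative_psiAux, hQ, map_zero]
    have hC := Polynomial.eq_C_of_derivative_eq_zero hder
    have e1 := psiAux_eval_one r Q
    have e0 := psiAux_eval_zero r Q
    rw [hC, Polynomial.eval_C] at e1 e0
    rw [← e1, e0]
  by_cases hP : P = 0
  · subst hP
    refine ⟨by simp, fun j => by simp, fun j => by simp [hinv 0 (by simp)], by simp⟩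
  -- step 1 : the translate equals P
  obtain ⟨Q, hQ⟩ := hdvd
  have hQ' : trAux r P = P * Q := hQ
  have hcomp : (psiAux r P).comp (Polynomial.X + 1) = psiAux r P * psiAux r Q := by
    rw [← psiAux_trAux, hQ', map_mul]
  have hp0 : psiAux r P ≠ 0 := fun h => hP (psiAux_injective r (by rw [h, map_zero]))
  have hq0 : psiAux r Q ≠ 0 := by
    intro h
    have hQ0 : Q = 0 := psiAux_injective r (by rw [h, map_zero])
    rw [hQ0, mul_zero] at hQ'
    exact hP (trAux_injective r (by rw [hQ', map_zero]))
  have hdeg : (psiAux r P).natDegree = (psiAux r P).natDegree + (psiAux r Q).natDegree := by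
    rw [← Polynomial.natDegree_mul hp0 hq0, ← hcomp, Polynomial.natDegree_comp]
    have : (Polynomial.X + 1 : Polynomial (MvPolynomial (Fin n) R)).natDegree = 1 := by
      simpa using Polynomial.natDegree_X_add_C (1 : MvPolynomial (Fin n) R)
    rw [this, mul_one]
  have hqdeg : (psiAux r Q).natDegree = 0 := by omega
  have hqc := Polynomial.eq_C_of_natDegree_eq_zero hqdeg
  have hX1deg : (Polynomial.X + 1 : Polynomial (MvPolynomial (Fin n) R)).natDegree = 1 := by
    simpa using Polynomial.natDegree_X_add_C (1 : MvPolynomial (Fin n) R)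
  have hlead := congrArg Polynomial.leadingCoeff hcomp
  rw [Polynomial.leadingCoeff_comp (by rw [hX1deg]; norm_num), hqc,
    Polynomial.leadingCoeff_mul, Polynomial.leadingCoeff_C] at hlead
  have hX1lead : (Polynomial.X + 1 : Polynomial (MvPolynomial (Fin n) R)).leadingCoeff = 1 := by
    simpa using Polynomial.leadingCoeff_X_add_C (1 : MvPolynomial (Fin n) R)
  rw [hX1lead, one_pow, mul_one] at hlead
  have hc1 : (psiAux r Q).coeff 0 = 1 :=
    mul_left_cancel₀ (Polynomial.leadingCoeff_ne_zero.mpr hp0) (by rw [mul_one, ← hlead])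
  have hQ1 : Q = 1 := psiAux_injective r (by rw [hqc, hc1, map_one, map_one])
  have h1 : trAux r P = P := by rw [hQ', hQ1, mul_one]
  -- step 2 : the polynomial ψ P is constant
  have hshift : (psiAux r P).comp (Polynomial.X + 1) = psiAux r P := by
    rw [← psiAux_trAux, h1]
  have heval : ∀ m : ℕ, (psiAux r P).eval ((m : MvPolynomial (Fin n) R)) = P := by
    intro m
    induction m with
    | zero => simpa using psiAux_eval_zero r P
    | succ k ih =>
        have h2 : (psiAux r P).eval (((k : ℕ) + 1 : MvPolynomial (Fin n) R))
            = ((psiAux r P).comp (Polynomial.X + 1)).eval ((k : ℕ) : MvPolynomial (Fin n) R) := by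
          rw [Polynomial.eval_comp]
          simp
        push_cast
        rw [h2, hshift, ih]
  have hconst : psiAux r P = Polynomial.C P := by
    have hinf : {x | (psiAux r P - Polynomial.C P).IsRoot x}.Infinite := by
      apply Set.infinite_of_injective_forall_mem
        (f := fun m : ℕ => ((m : ℕ) : MvPolynomial (Fin n) R))
      · exact Nat.cast_injective
      · intro m
        simp [Polynomial.IsRoot, heval m]
    have h0 := Polynomial.eq_zero_of_infinite_isRoot _ hinf
    rw [sub_eq_zero] at h0
    exact h0
  have hD : ∑ i, C (r i) * pderiv i P = 0 := by
    apply psiAux_injective r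
    rw [← derivative_psiAux, hconst, map_zero]
    simp
  exact ⟨h1, hcomp2 P hD, fun j => hinv _ (hcomp2 P hD j), hD⟩
end

section
/- Let F be a characteristic-zero differential field whose field of constants is algebraically closed, and let E ⊇ F be a no-new-constants differential field extension containing elements x_1,…,x_l with x_i′ ∈ F that are algebraically independent over F, so that the subring F[x_1,…,x_l] of E is a polynomial ring closed under the derivation of E. If R ∈ F[x_1,…,x_l] is an irreducible polynomial, then R and its derivative R′ (the derivative of R taken in E, which again lies in F[x_1,…,x_l]) are relatively prime in F[x_1,…,x_l]. -/
set_option maxHeartbeats 1000000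


namespace IrrRelPrimeAux

open MvPolynomial Finsupp

variable {K : Type*} [Field K] {σ : Type*}

/-- Apply a function to every coefficient of a polynomial. -/
noncomputable def mapD (f : K → K) (P : MvPolynomial σ K) : MvPolynomial σ K :=
  ∑ m ∈ P.support, monomial m (f (P.coeff m))

lemma coeff_mapD (f : K → K) (hf0 : f 0 = 0) (P : MvPolynomial σ K) (m : σ →₀ ℕ) :
    (mapD f P).coeff m = f (P.coeff m) := by
  classical
  rw [mapD, coeff_sum]
  simp only [coeff_monomial]
  rw [Finset.sum_ite_eq' P.support m (fun m' => f (P.coeff m'))]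
  split_ifs with h
  · rfl
  · rw [MvPolynomial.notMem_support_iff.mp h, hf0]

lemma mapD_add (f : K → K) (hf0 : f 0 = 0) (hfadd : ∀ a b, f (a + b) = f a + f b)
    (P Q : MvPolynomial σ K) : mapD f (P + Q) = mapD f P + mapD f Q := by
  ext m; simp [coeff_mapD f hf0, hfadd]

lemma mapD_C (f : K → K) (hf0 : f 0 = 0) (a : K) :
    mapD f (C a : MvPolynomial σ K) = C (f a) := by
  classical
  ext m
  rw [coeff_mapD f hf0, coeff_C, coeff_C]
  split_ifs
  · rfl
  · exact hf0

lemma mapD_mul_X (f : K → K) (hf0 : f 0 = 0) (P : MvPolynomial σ K) (i : σ) :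
    mapD f (P * X i) = mapD f P * X i := by
  classical
  ext m
  rw [coeff_mapD f hf0, coeff_mul_X', coeff_mul_X']
  split_ifs with h
  · rw [coeff_mapD f hf0]
  · exact hf0

lemma support_mapD (f : K → K) (hf0 : f 0 = 0) (P : MvPolynomial σ K) :
    (mapD f P).support ⊆ P.support := by
  intro m hm
  rw [MvPolynomial.mem_support_iff] at hm ⊢
  intro h
  exact hm (by rw [coeff_mapD f hf0, h, hf0])

/-- The "total derivative" polynomial. -/
noncomputable def polyD [Fintype σ] (f : K → K) (dx : σ → K) (P : MvPolynomial σ K) :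
    MvPolynomial σ K :=
  mapD f P + ∑ i, C (dx i) * pderiv i P

lemma coeff_pderiv_sum [DecidableEq σ] (P : MvPolynomial σ K) (i : σ) (m : σ →₀ ℕ) :
    coeff m (pderiv i P) =
      ∑ s ∈ P.support, if s - single i 1 = m then P.coeff s * (s i : K) else 0 := by
  classical
  conv_lhs => rw [P.as_sum]
  rw [map_sum, coeff_sum]
  refine Finset.sum_congr rfl fun s _ => ?_
  rw [pderiv_monomial, coeff_monomial]

variable [LinearOrder σ]

lemma support_pderiv_le (P : MvPolynomial σ K) (i : σ) {T : Lex (σ →₀ ℕ)}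
    (hT : ∀ s ∈ P.support, toLex s ≤ T) :
    ∀ m ∈ (pderiv i P).support, toLex m ≤ T := by
  intro m hm
  rw [MvPolynomial.mem_support_iff, coeff_pderiv_sum] at hm
  obtain ⟨s, hs, hne⟩ := Finset.exists_ne_zero_of_sum_ne_zero hm
  split_ifs at hne with h
  · calc toLex m = toLex (s - single i 1) := by rw [h]
      _ ≤ toLex s := toLex_monotone tsub_le_self
      _ ≤ T := hT s hs
  · exact absurd rfl hne

lemma toLex_strictMono' : StrictMono (@toLex (σ →₀ ℕ)) :=
  toLex_monotone.strictMono_of_injective toLex.injective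

lemma coeff_pderiv_top (P : MvPolynomial σ K) (i : σ) {M : σ →₀ ℕ}
    (hM : ∀ s ∈ P.support, toLex s ≤ toLex M) :
    coeff M (pderiv i P) = 0 := by
  classical
  rw [coeff_pderiv_sum]
  refine Finset.sum_eq_zero fun s hs => ?_
  split_ifs with h
  · by_cases hsi : s i = 0
    · simp [hsi]
    · exfalso
      have happ : ∀ j, s j - (single i 1 : σ →₀ ℕ) j = M j := fun j => by
        rw [← Finsupp.tsub_apply, h]
      have hs_eq : s = M + single i 1 := by
        ext j
        have hj' := happ j
        rw [Finsupp.add_apply]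
        by_cases hj : j = i
        · subst hj
          rw [single_eq_same] at hj' ⊢
          omega
        · rw [single_eq_of_ne hj] at hj' ⊢
          omega
      have hlt : toLex M < toLex s := by
        rw [hs_eq]
        exact toLex_strictMono'
          (lt_add_of_pos_right M (pos_iff_ne_zero.mpr
            (fun hz => one_ne_zero (Finsupp.single_eq_zero.mp hz))))
      exact hlt.not_ge (hM s hs)
  · rfl

lemma lex_add_lt_add_right {u v s : σ →₀ ℕ} (h : toLex u < toLex v) :
    toLex (u + s) < toLex (v + s) := by
  rw [Finsupp.Lex.lt_iff] at h ⊢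
  obtain ⟨i, hi, hlt⟩ := h
  refine ⟨i, fun j hj => ?_, ?_⟩
  · show (u + s) j = (v + s) j
    rw [Finsupp.add_apply, Finsupp.add_apply]
    have : u j = v j := hi j hj
    omega
  · show (u + s) i < (v + s) i
    rw [Finsupp.add_apply, Finsupp.add_apply]
    have : u i < v i := hlt
    omega

lemma lex_add_le_add_left {s t : σ →₀ ℕ} (u : σ →₀ ℕ) (h : toLex s ≤ toLex t) :
    toLex (u + s) ≤ toLex (u + t) := by
  rcases h.lt_or_eq with h | h
  · refine le_of_lt ?_
    rw [Finsupp.Lex.lt_iff] at h ⊢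
    obtain ⟨i, hi, hlt⟩ := h
    refine ⟨i, fun j hj => ?_, ?_⟩
    · show (u + s) j = (u + t) j
      rw [Finsupp.add_apply, Finsupp.add_apply]
      have : s j = t j := hi j hj
      omega
    · show (u + s) i < (u + t) i
      rw [Finsupp.add_apply, Finsupp.add_apply]
      have : s i < t i := hlt
      omega
  · rw [toLex.injective h]

lemma lex_add_lt_add {u v s t : σ →₀ ℕ} (h1 : toLex u < toLex v) (h2 : toLex s ≤ toLex t) :
    toLex (u + s) < toLex (v + t) :=
  lt_of_lt_of_le (lex_add_lt_add_right h1) (lex_add_le_add_left v h2)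

lemma support_polyD_le [Fintype σ] (f : K → K) (hf0 : f 0 = 0) (dx : σ → K)
    (P : MvPolynomial σ K) {T : Lex (σ →₀ ℕ)} (hT : ∀ s ∈ P.support, toLex s ≤ T) :
    ∀ m ∈ (polyD f dx P).support, toLex m ≤ T := by
  classical
  intro m hm
  rw [polyD] at hm
  rcases Finset.mem_union.mp (MvPolynomial.support_add hm) with h | h
  · exact hT m (support_mapD f hf0 P h)
  · obtain ⟨i, _, hi⟩ := Finset.mem_biUnion.mp (MvPolynomial.support_sum h)
    have hsub : m ∈ (pderiv i P).support := by
      rw [← smul_eq_C_mul] at hi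
      exact MvPolynomial.support_smul hi
    exact support_pderiv_le P i hT m hsub

lemma coeff_polyD_top [Fintype σ] (f : K → K) (hf0 : f 0 = 0) (dx : σ → K)
    (P : MvPolynomial σ K) {M : σ →₀ ℕ} (hM : ∀ s ∈ P.support, toLex s ≤ toLex M) :
    coeff M (polyD f dx P) = f (coeff M P) := by
  rw [polyD, coeff_add, coeff_mapD f hf0, coeff_sum, Finset.sum_eq_zero, add_zero]
  intro i _
  rw [coeff_C_mul, coeff_pderiv_top P i hM, mul_zero]

lemma coeff_top_mul {P Q : MvPolynomial σ K} {MP MQ : σ →₀ ℕ}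
    (hP : ∀ s ∈ P.support, toLex s ≤ toLex MP) (hQ : ∀ s ∈ Q.support, toLex s ≤ toLex MQ) :
    coeff (MP + MQ) (P * Q) = coeff MP P * coeff MQ Q := by
  classical
  rw [coeff_mul]
  rw [Finset.sum_eq_single (MP, MQ)]
  · intro b hb hne
    rw [Finset.HasAntidiagonal.mem_antidiagonal] at hb
    by_cases h1 : coeff b.1 P = 0
    · rw [h1, zero_mul]
    by_cases h2 : coeff b.2 Q = 0
    · rw [h2, mul_zero]
    exfalso
    have hb1 : toLex b.1 ≤ toLex MP := hP _ (MvPolynomial.mem_support_iff.mpr h1)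
    have hb2 : toLex b.2 ≤ toLex MQ := hQ _ (MvPolynomial.mem_support_iff.mpr h2)
    by_cases hc1 : b.1 = MP
    · have hc2 : b.2 = MQ := by
        have := hb
        rw [hc1] at this
        exact add_left_cancel this
      exact hne (Prod.ext hc1 hc2)
    · have hlt : toLex b.1 < toLex MP :=
        hb1.lt_of_ne (fun he => hc1 (toLex.injective he))
      exact absurd (congrArg toLex hb) (lex_add_lt_add hlt hb2).ne
  · intro hne
    exfalso
    apply hne
    rw [Finset.HasAntidiagonal.mem_antidiagonal]

lemma exists_top {P : MvPolynomial σ K} (hP : P ≠ 0) :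
    ∃ M, coeff M P ≠ 0 ∧ ∀ s ∈ P.support, toLex s ≤ toLex M := by
  obtain ⟨M, hM, hmax⟩ := P.support.exists_max_image toLex (support_nonempty.mpr hP)
  exact ⟨M, MvPolynomial.mem_support_iff.mp hM, hmax⟩

lemma polyD_C [Fintype σ] (f : K → K) (hf0 : f 0 = 0) (dx : σ → K) (a : K) :
    polyD f dx (C a : MvPolynomial σ K) = C (f a) := by
  simp [polyD, mapD_C f hf0, pderiv_C]

lemma polyD_add [Fintype σ] (f : K → K) (hf0 : f 0 = 0)
    (hfadd : ∀ a b, f (a + b) = f a + f b) (dx : σ → K) (P Q : MvPolynomial σ K) :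
    polyD f dx (P + Q) = polyD f dx P + polyD f dx Q := by
  rw [polyD, polyD, polyD, mapD_add f hf0 hfadd]
  simp only [map_add, mul_add, Finset.sum_add_distrib]
  ring

lemma polyD_mul_X [Fintype σ] (f : K → K) (hf0 : f 0 = 0) (dx : σ → K)
    (P : MvPolynomial σ K) (i : σ) :
    polyD f dx (P * X i) = polyD f dx P * X i + C (dx i) * P := by
  classical
  have hpd : ∀ j, pderiv j (P * X i) = pderiv j P * X i + (if i = j then P else 0) := by
    intro j
    rw [pderiv_mul]
    by_cases h : i = j
    · subst h
      rw [pderiv_X_self, mul_one, if_pos rfl]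
    · rw [pderiv_X_of_ne h, mul_zero, if_neg h]
  rw [polyD, polyD, mapD_mul_X f hf0, add_mul]
  simp_rw [hpd, mul_add, Finset.sum_add_distrib, mul_ite, mul_zero,
    Finset.sum_ite_eq Finset.univ i (fun j => C (dx j) * P), if_pos (Finset.mem_univ i),
    ← mul_assoc, ← Finset.sum_mul]
  ring

lemma aeval_polyD {E : Type*} [Field E] (D : E → E) (hD : IsDerivation D)
    (F : Subfield E) (hF : ∀ a ∈ F, D a ∈ F) {l : ℕ} (x : Fin l → E) (hx : ∀ i, D (x i) ∈ F)
    (P : MvPolynomial (Fin l) F) :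
    aeval x (polyD (fun a : F => (⟨D a, hF a a.2⟩ : F))
      (fun i => (⟨D (x i), hx i⟩ : F)) P) = D (aeval x P) := by
  have hD0 : D 0 = 0 := by
    have h := hD.map_add 0 0
    rw [add_zero] at h
    exact (left_eq_add.mp h)
  set f : F → F := fun a => (⟨D a, hF a a.2⟩ : F) with hfdef
  have hf0 : f 0 = 0 := Subtype.ext (by show D ((0 : F) : E) = ((0 : F) : E); simpa using hD0)
  have hfadd : ∀ a b, f (a + b) = f a + f b := fun a b => Subtype.ext (by
    show D ((a : E) + b) = D a + D b
    exact hD.map_add a b)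
  induction P using MvPolynomial.induction_on with
  | C a =>
      rw [polyD_C f hf0, aeval_C, aeval_C]
      rfl
  | add p q hp hq =>
      rw [polyD_add f hf0 hfadd, map_add (aeval x), hp, hq, map_add (aeval x), hD.map_add]
  | mul_X p i hp =>
      rw [polyD_mul_X f hf0]
      rw [show (aeval x) (p * X i) = (aeval x) p * x i by rw [map_mul (aeval x), aeval_X]]
      rw [hD.leibniz, map_add (aeval x), map_mul (aeval x), map_mul (aeval x), aeval_X,
        aeval_C, hp]
      have hdx : (algebraMap F E) (⟨D (x i), hx i⟩ : F) = D (x i) := rfl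
      rw [hdx]
      ring

end IrrRelPrimeAux

open MvPolynomial IrrRelPrimeAux Finsupp in
/-- Let `F` be a characteristic-zero differential field with algebraically closed
field of constants, and let `E ⊇ F` be a no-new-constants differential field
extension containing algebraically independent antiderivatives `x₁, …, x_l` of `F`,
so that `F[x₁,…,x_l] ⊆ E` is a polynomial ring closed under the derivation.  If
`R ∈ F[x₁,…,x_l]` is an irreducible polynomial, then `R` and its derivative `R'`
(taken in `E`, where it again lies in `F[x₁,…,x_l]`) are relatively prime. -/
theorem irreducible_isRelPrime_deriv
    {E : Type*} [Field E] [CharZero E]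
    (D : E → E) (hD : IsDerivation D)
    (F : Subfield E) (hF : ∀ a ∈ F, D a ∈ F)
    (C : Subfield E) (hC : ∀ c : E, c ∈ C ↔ (c ∈ F ∧ D c = 0))
    [IsAlgClosed C]
    (hNNC : ∀ a : E, D a = 0 → a ∈ F)
    {l : ℕ} (x : Fin l → E) (hx : ∀ i, D (x i) ∈ F)
    (hind : AlgebraicIndependent F x)
    (R R' : MvPolynomial (Fin l) F)
    (hirr : Irreducible R)
    (hR' : MvPolynomial.aeval x R' = D (MvPolynomial.aeval x R)) :
    IsRelPrime R R' := by
  classical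
  have hinj : Function.Injective (aeval x : MvPolynomial (Fin l) F →ₐ[F] E) :=
    algebraicIndependent_iff_injective_aeval.mp hind
  set f : F → F := fun a => (⟨D a, hF a a.2⟩ : F) with hfdef
  have hD0 : D 0 = 0 := by
    have h := hD.map_add 0 0
    rw [add_zero] at h
    exact (left_eq_add.mp h)
  have hf0 : f 0 = 0 := Subtype.ext (by show D ((0 : F) : E) = ((0 : F) : E); simpa using hD0)
  set dxF : Fin l → F := fun i => (⟨D (x i), hx i⟩ : F) with hdxdef
  have hR'eq : R' = polyD f dxF R := by
    apply hinj
    rw [hR', ← aeval_polyD D hD F hF x hx R]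
  by_contra hrel
  rw [IsRelPrime] at hrel
  push_neg at hrel
  obtain ⟨d, hdR, hdR', hdu⟩ := hrel
  obtain ⟨e, he⟩ := hdR
  have hRd : R ∣ R' := by
    rcases hirr.isUnit_or_isUnit he with h | h
    · exact absurd h hdu
    · obtain ⟨u, hu⟩ := h
      have hdr : d = R * ↑u⁻¹ := by
        rw [he, ← hu, mul_assoc, Units.mul_inv, mul_one]
      exact dvd_trans ⟨↑u⁻¹, hdr⟩ hdR'
  obtain ⟨Q, hQ⟩ := hRd
  have hR0 : R ≠ 0 := hirr.ne_zero
  obtain ⟨M, haM, hMmax⟩ := exists_top hR0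
  obtain ⟨c, hc⟩ : ∃ c : F, R' = MvPolynomial.C c * R := by
    by_cases hQ0 : Q = 0
    · exact ⟨0, by rw [hQ, hQ0, mul_zero, map_zero, zero_mul]⟩
    · obtain ⟨MQ, hqM, hQmax⟩ := exists_top hQ0
      have hmem : coeff (M + MQ) R' ≠ 0 := by
        rw [hQ, coeff_top_mul hMmax hQmax]
        exact mul_ne_zero haM hqM
      have hle : toLex (M + MQ) ≤ toLex M := by
        apply support_polyD_le f hf0 dxF R hMmax
        rw [← hR'eq]
        exact MvPolynomial.mem_support_iff.mpr hmem
      have hMQ0 : MQ = 0 := by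
        by_contra hne
        have h1 : toLex M < toLex (M + MQ) :=
          toLex_strictMono' (lt_add_of_pos_right M (pos_iff_ne_zero.mpr hne))
        exact absurd hle h1.not_ge
      have hQC : Q = MvPolynomial.C (coeff 0 Q) := by
        apply MvPolynomial.ext
        intro m
        rw [MvPolynomial.coeff_C]
        split_ifs with h
        · rw [← h]
        · by_contra hm
          have h1 : toLex m ≤ toLex MQ := hQmax m (MvPolynomial.mem_support_iff.mpr hm)
          rw [hMQ0] at h1
          have h2 : toLex (0 : Fin l →₀ ℕ) ≤ toLex m := toLex_monotone (zero_le : (0 : Fin l →₀ ℕ) ≤ m)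
          exact h (toLex.injective (le_antisymm h2 h1))
      exact ⟨coeff 0 Q, by conv_lhs => rw [hQ, mul_comm R Q, hQC]⟩
  -- leading coefficient relation : D a = c * a  where a = coeff M R
  have htop : f (coeff M R) = c * coeff M R := by
    have h1 : coeff M R' = c * coeff M R := by rw [hc, coeff_C_mul]
    have h2 : coeff M R' = f (coeff M R) := by
      rw [hR'eq]
      exact coeff_polyD_top f hf0 dxF R hMmax
    rw [← h2, h1]
  set a : F := coeff M R with hadef
  have haE : (a : E) ≠ 0 := fun h => haM (Subtype.ext h)
  have hDa : D (a : E) = (c : E) * (a : E) := congrArg Subtype.val htop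
  set y : E := aeval x R with hy
  have hDy : D y = (c : E) * y := by
    rw [← hR', hc, map_mul, aeval_C]
    rfl
  -- z := y / a is a constant
  have hzF : y * (↑a)⁻¹ ∈ F := by
    apply hNNC
    have h1 : (y * (↑a)⁻¹) * ↑a = y := by field_simp
    have h2 := hD.leibniz (y * (↑a)⁻¹) ↑a
    rw [h1, hDy, hDa] at h2
    have h3 : (y * (↑a)⁻¹) * ((c : E) * ↑a) = (c : E) * y := by
      field_simp
    rw [h3] at h2
    have h4 : D (y * (↑a)⁻¹) * ↑a = 0 := by linear_combination -h2
    rcases mul_eq_zero.mp h4 with h | h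
    · exact h
    · exact absurd h haE
  have hyF : y ∈ F := by
    have h1 : (y * (↑a)⁻¹) * ↑a = y := by field_simp
    exact h1 ▸ mul_mem hzF a.2
  have hRC : R = MvPolynomial.C (⟨y, hyF⟩ : F) := by
    apply hinj
    rw [aeval_C]
    rfl
  rcases eq_or_ne (⟨y, hyF⟩ : F) 0 with h0 | h0
  · rw [h0, map_zero] at hRC
    exact hR0 hRC
  · exact hirr.not_isUnit (hRC ▸ (IsUnit.map (MvPolynomial.C : F →+* MvPolynomial (Fin l) F)
      (isUnit_iff_ne_zero.mpr h0)))
end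

section
/- Let F be a characteristic-zero differential field whose field of constants is algebraically closed, and let E ⊇ F be a no-new-constants differential field extension containing elements x_1,…,x_l with x_i′ ∈ F that are algebraically independent over F. Let S, T ∈ F[x_1,…,x_l] be relatively prime polynomials and assume T has an irreducible factor R ∈ F[x_1,…,x_l] such that R² does not divide T. Then there is no element y ∈ F(x_1,…,x_l) with y′ = S/T. -/
set_option maxHeartbeats 1600000
set_option synthInstance.maxHeartbeats 400000

namespace NoAntiderivAux

open MvPolynomial AddMonoidAlgebra

variable {E : Type*} [Field E]

theorem d_zero {D : E → E} (hD : IsDerivation D) : D 0 = 0 := by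
  have h := hD.map_add 0 0
  rw [add_zero] at h
  exact left_eq_add.mp h

theorem d_one {D : E → E} (hD : IsDerivation D) : D 1 = 0 := by
  have h := hD.leibniz 1 1
  rw [mul_one, one_mul, mul_one] at h
  exact left_eq_add.mp h

theorem d_inv {D : E → E} (hD : IsDerivation D) {v : E} (hv : v ≠ 0) :
    D v⁻¹ = -(D v) / v ^ 2 := by
  have h := hD.leibniz v v⁻¹
  rw [mul_inv_cancel₀ hv, d_one hD] at h
  field_simp at h ⊢
  linear_combination -h

theorem d_div {D : E → E} (hD : IsDerivation D) (u : E) {v : E} (hv : v ≠ 0) :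
    D (u / v) = (D u * v - u * D v) / v ^ 2 := by
  rw [div_eq_mul_inv, hD.leibniz, d_inv hD hv]
  field_simp
  ring

/-- `D` as a map on the subfield `F` -/
def fd (D : E → E) (F : Subfield E) (hF : ∀ a ∈ F, D a ∈ F) (c : F) : F :=
  ⟨D (c : E), hF _ c.2⟩

theorem fd_zero (D : E → E) (F : Subfield E) (hD : IsDerivation D)
    (hF : ∀ a ∈ F, D a ∈ F) : fd D F hF 0 = 0 :=
  Subtype.ext (by simp [fd, d_zero hD])

theorem fd_add (D : E → E) (F : Subfield E) (hD : IsDerivation D)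
    (hF : ∀ a ∈ F, D a ∈ F) (c d : F) :
    fd D F hF (c + d) = fd D F hF c + fd D F hF d :=
  Subtype.ext (by push_cast [fd]; rw [hD.map_add])

variable {l : ℕ}

/-- coefficient-wise application of `D` to a polynomial over the subfield `F` -/
noncomputable def dmap (D : E → E) (F : Subfield E) (hD : IsDerivation D)
    (hF : ∀ a ∈ F, D a ∈ F) (P : MvPolynomial (Fin l) F) : MvPolynomial (Fin l) F :=
  AddMonoidAlgebra.ofCoeff (Finsupp.mapRange (fd D F hF) (fd_zero D F hD hF) (AddMonoidAlgebra.coeff P))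

theorem coeff_dmap (D : E → E) (F : Subfield E) (hD : IsDerivation D)
    (hF : ∀ a ∈ F, D a ∈ F) (P : MvPolynomial (Fin l) F) (m : Fin l →₀ ℕ) :
    coeff m (dmap D F hD hF P) = fd D F hF (coeff m P) :=
  by unfold MvPolynomial.coeff dmap; exact Finsupp.mapRange_apply (hf := fd_zero D F hD hF)

theorem support_dmap (D : E → E) (F : Subfield E) (hD : IsDerivation D)
    (hF : ∀ a ∈ F, D a ∈ F) (P : MvPolynomial (Fin l) F) :
    (dmap D F hD hF P).support ⊆ P.support :=
  by unfold MvPolynomial.support dmap; exact Finsupp.support_mapRange (hf := fd_zero D F hD hF)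

theorem dmap_C (D : E → E) (F : Subfield E) (hD : IsDerivation D)
    (hF : ∀ a ∈ F, D a ∈ F) (c : F) :
    dmap (l := l) D F hD hF (C c) = C (fd D F hF c) := by
  ext m
  rw [coeff_dmap]
  rcases eq_or_ne m 0 with rfl | hm
  · simp [coeff_C]
  · simp only [coeff_C, if_neg (Ne.symm hm)]
    exact_mod_cast fd_zero D F hD hF

theorem dmap_add (D : E → E) (F : Subfield E) (hD : IsDerivation D)
    (hF : ∀ a ∈ F, D a ∈ F) (P Q : MvPolynomial (Fin l) F) :
    dmap D F hD hF (P + Q) = dmap D F hD hF P + dmap D F hD hF Q := by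
  ext m
  rw [MvPolynomial.coeff_add, coeff_dmap, coeff_dmap, coeff_dmap, MvPolynomial.coeff_add, fd_add D F hD hF]

theorem dmap_mul_X (D : E → E) (F : Subfield E) (hD : IsDerivation D)
    (hF : ∀ a ∈ F, D a ∈ F) (P : MvPolynomial (Fin l) F) (i : Fin l) :
    dmap D F hD hF (P * X i) = dmap D F hD hF P * X i := by
  classical
  ext m
  rw [coeff_dmap, coeff_mul_X', coeff_mul_X']
  split_ifs with h
  · rw [coeff_dmap]
  · exact_mod_cast fd_zero D F hD hF

/-- the induced derivation on the polynomial ring -/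
noncomputable def delta (D : E → E) (F : Subfield E) (hD : IsDerivation D)
    (hF : ∀ a ∈ F, D a ∈ F) (x : Fin l → E) (hx : ∀ i, D (x i) ∈ F)
    (P : MvPolynomial (Fin l) F) : MvPolynomial (Fin l) F :=
  dmap D F hD hF P + ∑ i : Fin l, C (⟨D (x i), hx i⟩ : F) * pderiv i P

theorem coeff_delta (D : E → E) (F : Subfield E) (hD : IsDerivation D)
    (hF : ∀ a ∈ F, D a ∈ F) (x : Fin l → E) (hx : ∀ i, D (x i) ∈ F)
    (P : MvPolynomial (Fin l) F) (m : Fin l →₀ ℕ) :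
    coeff m (delta D F hD hF x hx P) =
      fd D F hF (coeff m P) +
        ∑ i : Fin l, (⟨D (x i), hx i⟩ : F) * coeff m (pderiv i P) := by
  rw [delta, MvPolynomial.coeff_add, coeff_dmap, MvPolynomial.coeff_sum]
  simp [coeff_C_mul]

theorem key_spec (D : E → E) (F : Subfield E) (hD : IsDerivation D)
    (hF : ∀ a ∈ F, D a ∈ F) (x : Fin l → E) (hx : ∀ i, D (x i) ∈ F)
    (P : MvPolynomial (Fin l) F) :
    D (MvPolynomial.aeval x P) =
      MvPolynomial.aeval x (dmap D F hD hF P)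
        + ∑ i : Fin l, D (x i) * MvPolynomial.aeval x (pderiv i P) := by
  classical
  induction P using MvPolynomial.induction_on with
  | C c =>
      simp only [aeval_C, dmap_C, pderiv_C, map_zero, mul_zero, Finset.sum_const_zero, add_zero]
      rfl
  | add p q hp hq =>
      rw [map_add, hD.map_add, hp, hq, dmap_add, map_add]
      simp only [map_add, mul_add, Finset.sum_add_distrib]
      ring
  | mul_X p i hp =>
      have h2 : ∀ j : Fin l, pderiv j (p * X i) =
          pderiv j p * X i + if j = i then p else 0 := by
        intro j
        rw [pderiv_mul]
        rcases eq_or_ne j i with rfl | h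
        · simp
        · simp [pderiv_X_of_ne (Ne.symm h), h]
      rw [map_mul, aeval_X, hD.leibniz, hp, dmap_mul_X, map_mul, aeval_X]
      simp only [h2, map_add, map_mul, aeval_X, apply_ite (MvPolynomial.aeval x), map_zero,
        mul_add, mul_ite, mul_zero, Finset.sum_add_distrib, Finset.sum_ite_eq']
      rw [add_mul, Finset.sum_mul]
      simp only [mul_assoc, Finset.mem_univ, if_true]
      ring

theorem delta_spec (D : E → E) (F : Subfield E) (hD : IsDerivation D)
    (hF : ∀ a ∈ F, D a ∈ F) (x : Fin l → E) (hx : ∀ i, D (x i) ∈ F)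
    (P : MvPolynomial (Fin l) F) :
    D (MvPolynomial.aeval x P) = MvPolynomial.aeval x (delta D F hD hF x hx P) := by
  rw [key_spec D F hD hF x hx P, delta, map_add, map_sum]
  congr 1
  refine Finset.sum_congr rfl fun i _ => ?_
  rw [map_mul, aeval_C]
  rfl

section Generic
variable {K : Type*} [CommRing K] [CharZero K] {l : ℕ}

theorem support_pderiv_subset (p : MvPolynomial (Fin l) K) (i : Fin l) :
    ∀ m ∈ (pderiv i p).support, ∃ s ∈ p.support, s i ≠ 0 ∧ m = s - Finsupp.single i 1 := by
  classical
  intro m hm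
  have hrep : pderiv i p =
      ∑ s ∈ p.support, monomial (s - Finsupp.single i 1) (coeff s p * (s i : K)) := by
    conv_lhs => rw [p.as_sum]
    rw [map_sum]
    exact Finset.sum_congr rfl fun s _ => pderiv_monomial
  rw [hrep] at hm
  obtain ⟨s, hs, hms⟩ := Finset.mem_biUnion.mp (MvPolynomial.support_sum hm)
  rw [support_monomial] at hms
  by_cases h0 : coeff s p * (s i : K) = 0
  · rw [if_pos h0] at hms; exact absurd hms (Finset.notMem_empty m)
  · rw [if_neg h0] at hms
    refine ⟨s, hs, ?_, Finset.mem_singleton.mp hms⟩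
    intro hsi
    exact h0 (by rw [hsi]; simp)

theorem supDegree_pderiv_le (p : MvPolynomial (Fin l) K) (i : Fin l) :
    (pderiv i p).supDegree (toLex : (Fin l →₀ ℕ) → Lex (Fin l →₀ ℕ)) ≤
      p.supDegree toLex := by
  refine Finset.sup_le fun m hm => ?_
  obtain ⟨s, hs, _, rfl⟩ := support_pderiv_subset p i m hm
  exact le_trans (Finsupp.toLex_monotone tsub_le_self) (Finset.le_sup hs)

theorem coeff_pderiv_top {p : MvPolynomial (Fin l) K} {α : Fin l →₀ ℕ}
    (hα : p.supDegree (toLex : (Fin l →₀ ℕ) → Lex (Fin l →₀ ℕ)) = toLex α) (i : Fin l) :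
    coeff α (pderiv i p) = 0 := by
  by_contra h
  obtain ⟨s, hs, hsi, he⟩ := support_pderiv_subset p i α (mem_support_iff.mpr h)
  have hlt : toLex α < toLex s := by
    refine lt_of_le_of_ne (Finsupp.toLex_monotone (he ▸ tsub_le_self)) fun hc => ?_
    have hαs : α = s := toLex.injective hc
    have : α i = s i - 1 := by rw [he, Finsupp.tsub_apply, Finsupp.single_eq_same]
    rw [hαs] at this
    omega
  have h2 : toLex s ≤ p.supDegree toLex := Finset.le_sup hs
  rw [hα] at h2
  exact absurd hlt (not_lt.mpr h2)

theorem eq_C_of_supDegree_le_zero {p : MvPolynomial (Fin l) K}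
    (h : p.supDegree (toLex : (Fin l →₀ ℕ) → Lex (Fin l →₀ ℕ)) ≤ 0) : ∃ c, p = C c := by
  classical
  refine ⟨MvPolynomial.coeff 0 p, ?_⟩
  ext m
  rw [coeff_C]
  split_ifs with hm
  · rw [hm]
  · by_contra hc
    have hmem : m ∈ p.support := mem_support_iff.mpr hc
    have h1 : toLex m ≤ (0 : Lex (Fin l →₀ ℕ)) := le_trans (Finset.le_sup hmem) h
    have h2 : (0 : Lex (Fin l →₀ ℕ)) ≤ toLex m := bot_le
    exact hm (toLex.injective (show toLex 0 = toLex m from (le_antisymm h1 h2).symm))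

end Generic

theorem supDegree_delta_le {E : Type*} [Field E] [CharZero E] {l : ℕ}
    (D : E → E) (F : Subfield E) (hD : IsDerivation D)
    (hF : ∀ a ∈ F, D a ∈ F) (x : Fin l → E) (hx : ∀ i, D (x i) ∈ F)
    (P : MvPolynomial (Fin l) F) :
    (delta D F hD hF x hx P).supDegree (toLex : (Fin l →₀ ℕ) → Lex (Fin l →₀ ℕ)) ≤
      P.supDegree toLex := by
  refine supDegree_add_le.trans (sup_le (Finset.sup_mono (support_dmap D F hD hF P)) ?_)
  refine supDegree_sum_le.trans (Finset.sup_le fun i _ => ?_)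
  refine (supDegree_mul_le (fun _ _ => rfl)).trans ?_
  rw [MvPolynomial.supDegree_toLex_C, zero_add]
  exact supDegree_pderiv_le P i

end NoAntiderivAux

open MvPolynomial AddMonoidAlgebra NoAntiderivAux

/-- Let `F` be a characteristic-zero differential field with algebraically closed
field of constants, and let `E ⊇ F` be a no-new-constants differential field
extension containing algebraically independent antiderivatives `x₁, …, x_l` of `F`.
Let `S, T ∈ F[x₁,…,x_l]` be relatively prime polynomials such that `T` has an
irreducible factor `R` with `R² ∤ T`.  Then no element `y ∈ F(x₁,…,x_l)` satisfies
`y' = S/T`. -/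
theorem no_antiderivative_of_simple_irreducible_factor
    {E : Type*} [Field E] [CharZero E]
    (D : E → E) (hD : IsDerivation D)
    (F : Subfield E) (hF : ∀ a ∈ F, D a ∈ F)
    (C : Subfield E) (hC : ∀ c : E, c ∈ C ↔ (c ∈ F ∧ D c = 0))
    [IsAlgClosed C]
    (hNNC : ∀ a : E, D a = 0 → a ∈ F)
    {l : ℕ} (x : Fin l → E) (hx : ∀ i, D (x i) ∈ F)
    (hind : AlgebraicIndependent F x)
    (S T R : MvPolynomial (Fin l) F)
    (hST : IsRelPrime S T)
    (hirr : Irreducible R) (hRT : R ∣ T) (hR2 : ¬ R ^ 2 ∣ T) :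
    ¬ ∃ y ∈ Subfield.closure (↑F ∪ Set.range x),
        D y = MvPolynomial.aeval x S / MvPolynomial.aeval x T := by
  rintro ⟨y, hyW, hDy⟩
  classical
  have hinj : Function.Injective (MvPolynomial.aeval x : MvPolynomial (Fin l) F →ₐ[F] E) := hind
  have hane : ∀ {q : MvPolynomial (Fin l) F}, q ≠ 0 → (MvPolynomial.aeval x) q ≠ 0 := by
    intro q hq h0
    exact hq (hinj (h0.trans (map_zero _).symm))
  -- Step 1 : `y` is a quotient of polynomial expressions
  let W : Subfield E :=
    { carrier := {z : E | ∃ A B : MvPolynomial (Fin l) F,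
        (MvPolynomial.aeval x) B ≠ 0 ∧ z = (MvPolynomial.aeval x) A / (MvPolynomial.aeval x) B}
      zero_mem' := ⟨0, 1, by simp, by simp⟩
      one_mem' := ⟨1, 1, by simp, by simp⟩
      add_mem' := by
        rintro z1 z2 ⟨A1, B1, h1, rfl⟩ ⟨A2, B2, h2, rfl⟩
        exact ⟨A1 * B2 + B1 * A2, B1 * B2, by simp [h1, h2],
          by rw [map_mul, map_add, map_mul, map_mul, div_add_div _ _ h1 h2]⟩
      mul_mem' := by
        rintro z1 z2 ⟨A1, B1, h1, rfl⟩ ⟨A2, B2, h2, rfl⟩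
        exact ⟨A1 * A2, B1 * B2, by simp [h1, h2], by rw [map_mul, map_mul, div_mul_div_comm]⟩
      neg_mem' := by
        rintro z ⟨A, B, h, rfl⟩
        exact ⟨-A, B, h, by rw [map_neg, neg_div]⟩
      inv_mem' := by
        rintro z ⟨A, B, h, rfl⟩
        by_cases hA : (MvPolynomial.aeval x) A = 0
        · exact ⟨0, 1, by simp, by simp [hA]⟩
        · exact ⟨B, A, hA, by rw [inv_div]⟩ }
  have hle : Subfield.closure (↑F ∪ Set.range x) ≤ W := by
    rw [Subfield.closure_le]
    rintro z (hz | ⟨i, rfl⟩)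
    · exact ⟨MvPolynomial.C ⟨z, hz⟩, 1, by simp, by rw [map_one, div_one, aeval_C]; rfl⟩
    · exact ⟨X i, 1, by simp, by rw [map_one, div_one, aeval_X]⟩
  obtain ⟨A1, B1, hB1, hyform⟩ := hle hyW
  have hB1' : B1 ≠ 0 := fun h => hB1 (by rw [h, map_zero])
  obtain ⟨A, B, c, hrp, hcA, hcB⟩ :=
    UniqueFactorizationMonoid.exists_reduced_factors' A1 B1 hB1'
  have hc0 : c ≠ 0 := fun h => hB1' (by rw [← hcB, h, zero_mul])
  have hB0 : B ≠ 0 := fun h => hB1' (by rw [← hcB, h, mul_zero])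
  have hyform' : y = (MvPolynomial.aeval x) A / (MvPolynomial.aeval x) B := by
    rw [hyform, ← hcA, ← hcB, map_mul, map_mul, mul_div_mul_left _ _ (hane hc0)]
  rw [hyform'] at hDy
  have hT0 : T ≠ 0 := fun h => hR2 (h ▸ dvd_zero _)
  have hTne := hane hT0
  have hBne := hane hB0
  -- Step 2 : translate into a polynomial identity
  set Δ : MvPolynomial (Fin l) F → MvPolynomial (Fin l) F := delta D F hD hF x hx with hΔdef
  have hΔspec : ∀ P, D ((MvPolynomial.aeval x) P) = (MvPolynomial.aeval x) (Δ P) := by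
    intro P; rw [hΔdef]; exact delta_spec D F hD hF x hx P
  have hDyq : (D ((MvPolynomial.aeval x) A) * (MvPolynomial.aeval x) B -
      (MvPolynomial.aeval x) A * D ((MvPolynomial.aeval x) B)) * (MvPolynomial.aeval x) T
      = (MvPolynomial.aeval x) S * (MvPolynomial.aeval x) B ^ 2 := by
    rw [d_div hD _ hBne] at hDy
    exact (div_eq_div_iff (pow_ne_zero 2 hBne) hTne).mp hDy
  have star : (Δ A * B - A * Δ B) * T = S * B ^ 2 := by
    apply hinj
    rw [map_mul, map_mul, map_sub, map_mul, map_mul, map_pow, ← hΔspec, ← hΔspec]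
    exact hDyq
  -- Step 3 : valuation analysis at `R`
  have hprime : Prime R := (UniqueFactorizationMonoid.irreducible_iff_prime).mp hirr
  have hRne : R ≠ 0 := hirr.ne_zero
  obtain ⟨T₀, hT₀eq⟩ := hRT
  have hRT₀ : ¬ R ∣ T₀ := fun ⟨w, hw⟩ => hR2 ⟨w, by rw [hT₀eq, hw]; ring⟩
  obtain ⟨n, B₀, hRB₀, hBeq⟩ := WfDvdMonoid.max_power_factor hB0 hirr
  have hΔmul : ∀ P Q, Δ (P * Q) = Δ P * Q + P * Δ Q := by
    intro P Q
    apply hinj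
    simp only [map_add, map_mul, ← hΔspec]
    exact hD.leibniz _ _
  have hΔpow : ∀ (P : MvPolynomial (Fin l) F) (m : ℕ),
      Δ (P ^ (m + 1)) = (m + 1 : MvPolynomial (Fin l) F) * P ^ m * Δ P := by
    intro P m
    induction m with
    | zero => simp [pow_one]
    | succ k ih =>
        have hstep : P ^ (k + 1 + 1) = P ^ (k + 1) * P := by ring
        rw [hstep, hΔmul, ih]
        push_cast
        ring
  have hΔR : R ∣ Δ R := by
    rcases n with _ | m
    · -- `R` does not divide `B` at all : contradiction already
      exfalso
      rw [pow_zero, one_mul] at hBeq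
      have h1 : R ∣ S * B ^ 2 := by
        rw [← star]
        exact Dvd.dvd.trans ⟨T₀, hT₀eq⟩ (dvd_mul_left T _)
      rcases hprime.2.2 _ _ h1 with hS | hB2
      · exact hirr.not_isUnit (hST hS ⟨T₀, hT₀eq⟩)
      · have hRB : R ∣ B := by
          rcases hprime.2.2 _ _ (by rwa [sq] at hB2) with h | h <;> exact h
        rw [hBeq] at hRB
        exact hRB₀ hRB
    · have hΔB : Δ (R ^ (m + 1) * B₀) =
          ((m + 1 : MvPolynomial (Fin l) F) * R ^ m * Δ R) * B₀ + R ^ (m + 1) * Δ B₀ := by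
        rw [hΔmul, hΔpow]
      rw [hBeq, hT₀eq, hΔB] at star
      set G : MvPolynomial (Fin l) F :=
        Δ A * (R * B₀) - A * ((m + 1 : MvPolynomial (Fin l) F) * Δ R * B₀ + R * Δ B₀) with hG
      have key : G * T₀ = S * (R ^ (m + 1) * B₀ ^ 2) := by
        have h2 : R ^ (m + 1) * (G * T₀) = R ^ (m + 1) * (S * (R ^ (m + 1) * B₀ ^ 2)) := by
          rw [hG]
          linear_combination star
        exact mul_left_cancel₀ (pow_ne_zero _ hRne) h2
      have hRG : R ∣ G := by
        rcases hprime.2.2 _ _ (⟨S * R ^ m * B₀ ^ 2, by rw [key]; ring⟩ : R ∣ G * T₀) with h | h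
        · exact h
        · exact absurd h hRT₀
      have hRmain : R ∣ (m + 1 : MvPolynomial (Fin l) F) * Δ R * B₀ * A := by
        have h1 : (m + 1 : MvPolynomial (Fin l) F) * Δ R * B₀ * A =
            Δ A * (R * B₀) - A * (R * Δ B₀) - G := by rw [hG]; ring
        exact h1 ▸ dvd_sub (dvd_sub ⟨Δ A * B₀, by ring⟩ ⟨A * Δ B₀, by ring⟩) hRG
      rcases hprime.2.2 _ _ hRmain with h | hA'
      · rcases hprime.2.2 _ _ h with h2 | hB₀d
        · rcases hprime.2.2 _ _ h2 with hcast | hΔRd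
          · exfalso
            have hnum : IsUnit (m + 1 : MvPolynomial (Fin l) F) := by
              have h5 : ((m : MvPolynomial (Fin l) F) + 1) = MvPolynomial.C ((m + 1 : ℕ) : F) := by
                rw [map_natCast (MvPolynomial.C : F →+* MvPolynomial (Fin l) F)]
                push_cast
                ring
              rw [h5]
              exact (isUnit_iff_ne_zero.mpr (Nat.cast_ne_zero.mpr (Nat.succ_ne_zero m))).map
                (MvPolynomial.C : F →+* MvPolynomial (Fin l) F)
            exact hirr.not_isUnit (isUnit_of_dvd_unit hcast hnum)
          · exact hΔRd
        · exact absurd hB₀d hRB₀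
      · exact absurd (hirr.not_isUnit (hrp hA' ⟨R ^ m * B₀, by rw [hBeq]; ring⟩)) not_false
  -- Step 4 : `Δ R = C c * R` for a constant `c`
  obtain ⟨M, hM⟩ := hΔR
  have hdegΔ : (Δ R).supDegree (toLex : (Fin l →₀ ℕ) → Lex (Fin l →₀ ℕ)) ≤
      R.supDegree toLex := supDegree_delta_le D F hD hF x hx R
  have hMc : ∃ cc : F, Δ R = MvPolynomial.C cc * R := by
    rcases eq_or_ne M 0 with rfl | hM0
    · exact ⟨0, by rw [hM, mul_zero, map_zero, zero_mul]⟩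
    · have hmul := supDegree_mul (toLex.injective) (fun _ _ => rfl)
        (mul_ne_zero ((leadingCoeff_ne_zero toLex.injective).mpr hRne)
          ((leadingCoeff_ne_zero toLex.injective).mpr hM0)) hRne hM0
      have hle2 : R.supDegree (toLex : (Fin l →₀ ℕ) → Lex (Fin l →₀ ℕ)) + M.supDegree toLex ≤
          R.supDegree toLex := by
        rw [← hmul, ← hM]
        exact hdegΔ
      have hM0deg : M.supDegree (toLex : (Fin l →₀ ℕ) → Lex (Fin l →₀ ℕ)) ≤ 0 := by
        by_contra hgt
        have h0lt : (0 : Lex (Fin l →₀ ℕ)) < M.supDegree toLex := lt_of_not_ge hgt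
        have h3 := add_lt_add_right h0lt (R.supDegree (toLex : (Fin l →₀ ℕ) → Lex (Fin l →₀ ℕ)))
        rw [add_zero] at h3
        exact absurd (lt_of_lt_of_le h3 hle2) (lt_irrefl _)
      obtain ⟨cc, hcc⟩ := eq_C_of_supDegree_le_zero hM0deg
      exact ⟨cc, by rw [hM, hcc]; ring⟩
  obtain ⟨cc, hc⟩ := hMc
  -- Step 5 : extract the top coefficient relation
  obtain ⟨α, hαs, hαd⟩ := exists_supDegree_mem_support toLex hRne
  set r : F := MvPolynomial.coeff α R with hrdef
  have hr0 : r ≠ 0 := mem_support_iff.mp hαs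
  have hcoef : fd D F hF r = cc * r := by
    have h1 := congrArg (MvPolynomial.coeff α) hc
    rw [hΔdef, coeff_delta, coeff_C_mul,
      Finset.sum_eq_zero (fun i _ => by rw [coeff_pderiv_top hαd i, mul_zero]), add_zero] at h1
    exact h1
  have hDr : D (r : E) = (cc : E) * (r : E) := by
    have h := congrArg Subtype.val hcoef
    simpa [fd] using h
  -- Step 6 : contradiction with algebraic independence
  have hu : D ((MvPolynomial.aeval x) R) = (cc : E) * (MvPolynomial.aeval x) R := by
    rw [hΔspec R, hc, map_mul, aeval_C]
    rfl
  have hrne : (r : E) ≠ 0 := by exact_mod_cast hr0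
  have hv : D ((r : E)⁻¹ * (MvPolynomial.aeval x) R) = 0 := by
    rw [hD.leibniz, d_inv hD hrne, hDr, hu]
    field_simp
    ring
  have hvF : (r : E)⁻¹ * (MvPolynomial.aeval x) R ∈ F := hNNC _ hv
  have hfinal : (MvPolynomial.aeval x) (MvPolynomial.C r⁻¹ * R) =
      (MvPolynomial.aeval x) (MvPolynomial.C (⟨_, hvF⟩ : F)) := by
    rw [map_mul, aeval_C, aeval_C]
    show ((r⁻¹ : F) : E) * _ = _
    simp
    rfl
  have heq := hinj hfinal
  have hR_C : R = MvPolynomial.C (r * ⟨_, hvF⟩ : F) := by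
    rw [map_mul]
    calc R = MvPolynomial.C r * (MvPolynomial.C r⁻¹ * R) := by
            rw [← mul_assoc, ← map_mul, mul_inv_cancel₀ hr0, map_one, one_mul]
    _ = _ := by rw [heq]
  rcases eq_or_ne (r * ⟨_, hvF⟩ : F) 0 with h0 | hne0
  · exact hRne (by rw [hR_C, h0, map_zero])
  · exact hirr.not_isUnit (hR_C ▸ (isUnit_iff_ne_zero.mpr hne0).map
      (MvPolynomial.C : F →+* MvPolynomial (Fin l) F))
end

section
/- Let F be a characteristic-zero differential field whose field of constants C is algebraically closed, and let E = F(e_1,…,e_n) be a no-new-constants differential field extension of F, where e_1,…,e_n ∈ E ∖ {0} satisfy e_i′/e_i ∈ F and are algebraically independent over F. Then for every u ∈ E there exist t ∈ ℕ and power products p_1,…,p_t, each of the form p_j = Π_{i=1}^n e_i^{m_{ji}} with m_{ji} ∈ ℤ, such that F⟨u⟩ = F(p_1,…,p_t), where F⟨u⟩ denotes the differential subfield of E generated by F and u. -/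
namespace ExpoAux

variable {E : Type*} [Field E] {D : E → E}

theorem d0 (hD : IsDerivation D) : D 0 = 0 := by
  have := hD.map_add 0 0; simp at this; exact this

theorem d1 (hD : IsDerivation D) : D 1 = 0 := by
  have := hD.leibniz 1 1; simp at this; exact this

theorem dsum (hD : IsDerivation D) {ι : Type*} (s : Finset ι) (f : ι → E) :
    D (∑ i ∈ s, f i) = ∑ i ∈ s, D (f i) := by
  induction s using Finset.cons_induction with
  | empty => simpa using d0 hD
  | cons a s ha ih => rw [Finset.sum_cons, Finset.sum_cons, hD.map_add, ih]

theorem dinv (hD : IsDerivation D) {x : E} (hx : x ≠ 0) :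
    D x⁻¹ = -(D x * (x⁻¹ * x⁻¹)) := by
  have h1 : D (x * x⁻¹) = 0 := by rw [mul_inv_cancel₀ hx, d1 hD]
  rw [hD.leibniz] at h1
  have hinv : x * x⁻¹ = 1 := mul_inv_cancel₀ hx
  linear_combination x⁻¹ * h1 - D x⁻¹ * hinv

theorem dpow (hD : IsDerivation D) {x : E} (hx : x ≠ 0) (k : ℕ) :
    D (x ^ k) = (k : E) * (D x / x) * x ^ k := by
  induction k with
  | zero => simpa using d1 hD
  | succ k ih =>
    rw [pow_succ, hD.leibniz, ih]
    field_simp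
    push_cast; ring

theorem dzpow (hD : IsDerivation D) {x : E} (hx : x ≠ 0) (k : ℤ) :
    D (x ^ k) = (k : E) * (D x / x) * x ^ k := by
  cases k with
  | ofNat k => rw [Int.ofNat_eq_coe, zpow_natCast, dpow hD hx]; push_cast; ring
  | negSucc k =>
    have hy : x ^ (k + 1) ≠ 0 := pow_ne_zero _ hx
    rw [zpow_negSucc, dinv hD hy, dpow hD hx]
    push_cast
    field_simp

theorem dneg (hD : IsDerivation D) (x : E) : D (-x) = - D x := by
  have h := hD.map_add x (-x)
  rw [add_neg_cancel, d0 hD] at h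
  linear_combination -h

theorem dprod (hD : IsDerivation D) {ι : Type*} (s : Finset ι) (f : ι → E)
    (hf : ∀ i ∈ s, f i ≠ 0) :
    D (∏ i ∈ s, f i) = (∑ i ∈ s, D (f i) / f i) * ∏ i ∈ s, f i := by
  induction s using Finset.cons_induction with
  | empty => simpa using d1 hD
  | cons a s ha ih =>
    have hfa : f a ≠ 0 := hf a (Finset.mem_cons_self a s)
    have hprod : ∏ i ∈ s, f i ≠ 0 :=
      Finset.prod_ne_zero_iff.mpr fun i hi => hf i (Finset.mem_cons_of_mem hi)
    rw [Finset.prod_cons, Finset.sum_cons, hD.leibniz,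
      ih (fun i hi => hf i (Finset.mem_cons_of_mem hi))]
    field_simp

end ExpoAux

namespace ExpoAux

variable {E : Type*} [Field E] {D : E → E}

/-- Key lemma: monomial-like elements with pairwise "ratio not in K" are
linearly independent over a differential subfield K. -/
theorem key (hD : IsDerivation D) (F : Subfield E)
    (hNNC : ∀ a : E, D a = 0 → a ∈ F)
    {G : Type*} [AddCommGroup G]
    (K : Subfield E) (hFK : ∀ x ∈ F, x ∈ K) (hDK : ∀ x ∈ K, D x ∈ K)
    (w : G → E) (hw : ∀ m, w m ∈ F)
    (M : G → E) (hM0 : ∀ m, M m ≠ 0) (hDM : ∀ m, D (M m) = w m * M m)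
    (hMdiv : ∀ m m', M (m - m') = M m / M m') :
    ∀ (S : Finset G) (k : G → E),
      (∀ m ∈ S, k m ∈ K) → (∀ m ∈ S, ∀ m' ∈ S, m ≠ m' → M (m - m') ∉ K) →
      ∑ m ∈ S, k m * M m = 0 → ∀ m ∈ S, k m = 0 := by
  classical
  intro S
  induction S using Finset.strongInduction with
  | _ S ih =>
    intro k hk hpair hsum
    by_contra hcon
    push_neg at hcon
    obtain ⟨m₁, hm₁S, hk₁⟩ := hcon
    set lam : E := D (k m₁) / k m₁ + w m₁ with hlam
    set k' : G → E := fun m => D (k m) + w m * k m - lam * k m with hk'def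
    have h1 : ∀ m ∈ S, D (k m * M m) = k' m * M m + lam * (k m * M m) := by
      intro m hm
      rw [hD.leibniz, hDM]
      simp only [hk'def]
      ring
    have hlamk₁ : lam * k m₁ = D (k m₁) + w m₁ * k m₁ := by
      rw [hlam]; field_simp
    have hk'm₁ : k' m₁ = 0 := by
      simp only [hk'def]
      rw [← hlamk₁, sub_self]
    have hsum' : ∑ m ∈ S, k' m * M m = 0 := by
      have : ∑ m ∈ S, k' m * M m
          = (∑ m ∈ S, D (k m * M m)) - lam * ∑ m ∈ S, k m * M m := by
        rw [Finset.mul_sum, ← Finset.sum_sub_distrib]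
        refine Finset.sum_congr rfl fun m hm => ?_
        rw [h1 m hm]; ring
      rw [this, ← dsum hD, hsum, d0 hD, mul_zero, sub_zero]
    have hsumE : ∑ m ∈ S.erase m₁, k' m * M m = 0 := by
      have h := Finset.add_sum_erase S (fun m => k' m * M m) hm₁S
      simp only [hk'm₁, zero_mul, zero_add] at h
      rw [h, hsum']
    have hK' : ∀ m ∈ S.erase m₁, k' m ∈ K := by
      intro m hm
      have hmS := Finset.mem_of_mem_erase hm
      have h1 : k m ∈ K := hk m hmS
      exact K.sub_mem (K.add_mem (hDK _ h1) (K.mul_mem (hFK _ (hw m)) h1))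
        (K.mul_mem (K.add_mem (K.div_mem (hDK _ (hk m₁ hm₁S)) (hk m₁ hm₁S))
          (hFK _ (hw m₁))) h1)
    have hzero : ∀ m ∈ S.erase m₁, k' m = 0 :=
      ih (S.erase m₁) (Finset.erase_ssubset hm₁S) k' hK'
        (fun m hm m' hm' hne => hpair m (Finset.mem_of_mem_erase hm)
          m' (Finset.mem_of_mem_erase hm') hne) hsumE
    by_cases hall : ∀ m ∈ S, m ≠ m₁ → k m = 0
    · have : ∑ m ∈ S, k m * M m = k m₁ * M m₁ := by
        refine Finset.sum_eq_single m₁ (fun m hm hne => by rw [hall m hm hne, zero_mul])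
          (fun h => absurd hm₁S h)
      rw [this] at hsum
      exact hk₁ ((mul_eq_zero.mp hsum).resolve_right (hM0 m₁))
    · push_neg at hall
      obtain ⟨m₂, hm₂S, hm₂ne, hk₂⟩ := hall
      have hk'₂ : k' m₂ = 0 := hzero m₂ (Finset.mem_erase.mpr ⟨hm₂ne, hm₂S⟩)
      have heig2 : D (k m₂ * M m₂) = lam * (k m₂ * M m₂) := by
        rw [h1 m₂ hm₂S, hk'₂, zero_mul, zero_add]
      have heig1 : D (k m₁ * M m₁) = lam * (k m₁ * M m₁) := by
        rw [h1 m₁ hm₁S, hk'm₁, zero_mul, zero_add]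
      set y := k m₂ * M m₂ with hy
      set z := k m₁ * M m₁ with hz
      have hz0 : z ≠ 0 := mul_ne_zero hk₁ (hM0 m₁)
      have hyz : y = y / z * z := (div_mul_cancel₀ y hz0).symm
      have hDx : D (y / z) = 0 := by
        have h2 : D y = D (y / z) * z + y / z * D z := by
          conv_lhs => rw [hyz]
          exact hD.leibniz _ _
        rw [heig1, heig2] at h2
        have h3 : D (y / z) * z = 0 := by
          have : y / z * (lam * z) = lam * y := by
            field_simp
          linear_combination (-1 : E) * h2 - this
        exact (mul_eq_zero.mp h3).resolve_right hz0
      have hxF : y / z ∈ F := hNNC _ hDx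
      have hMK : M (m₂ - m₁) ∈ K := by
        have hM21 : M (m₂ - m₁) = y / z * (k m₁ / k m₂) := by
          rw [hMdiv, hy, hz]
          field_simp [hM0 m₁, hM0 m₂, hk₁, hk₂]
        rw [hM21]
        exact K.mul_mem (hFK _ hxF) (K.div_mem (hk m₁ hm₁S) (hk m₂ hm₂S))
      exact hpair m₂ hm₂S m₁ hm₁S hm₂ne hMK

end ExpoAux

/-- The smallest subfield containing a set `s` which is closed under the map `D`
(the differential subfield generated by `s`). -/
def diffSubfieldClosure {E : Type*} [Field E] (D : E → E) (s : Set E) : Subfield E :=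
  sInf {L : Subfield E | s ⊆ ↑L ∧ ∀ a ∈ L, D a ∈ L}

/-- Let `E = F(e₁,…,eₙ)` be a no-new-constants differential field extension of a
characteristic-zero differential field `F` with algebraically closed field of
constants `C`, where the `eᵢ` are nonzero, satisfy `eᵢ'/eᵢ ∈ F`, and are
algebraically independent over `F`.  Then for every `u ∈ E` there are finitely many
power products `p₁, …, p_t` of the `eᵢ` (with integer exponents) such that the
differential subfield `F⟨u⟩` equals `F(p₁, …, p_t)`. -/
theorem exponential_extension_singly_generated_structure
    {E : Type*} [Field E] [CharZero E]
    (D : E → E) (hD : IsDerivation D)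
    (F : Subfield E) (hF : ∀ a ∈ F, D a ∈ F)
    (C : Subfield E) (hC : ∀ c : E, c ∈ C ↔ (c ∈ F ∧ D c = 0))
    [IsAlgClosed C]
    (hNNC : ∀ a : E, D a = 0 → a ∈ F)
    {n : ℕ} (e : Fin n → E) (he0 : ∀ i, e i ≠ 0) (he : ∀ i, D (e i) / e i ∈ F)
    (hind : AlgebraicIndependent F e)
    (hgen : Subfield.closure (↑F ∪ Set.range e) = ⊤)
    (u : E) :
    ∃ (t : ℕ) (p : Fin t → E),
      (∀ j, ∃ m : Fin n → ℤ, p j = ∏ i, e i ^ m i) ∧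
      diffSubfieldClosure D (↑F ∪ {u}) = Subfield.closure (↑F ∪ Set.range p) := by
  classical
  -- monomials
  set Mfn : (Fin n → ℤ) → E := fun m => ∏ i, e i ^ m i with hMfn
  have hM0 : ∀ m, Mfn m ≠ 0 :=
    fun m => Finset.prod_ne_zero_iff.mpr fun i _ => zpow_ne_zero _ (he0 i)
  have hMadd : ∀ m m', Mfn (m + m') = Mfn m * Mfn m' := by
    intro m m'
    rw [hMfn, ← Finset.prod_mul_distrib]
    exact Finset.prod_congr rfl fun i _ => by rw [Pi.add_apply, zpow_add₀ (he0 i)]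
  have hMzero : Mfn 0 = 1 := by simp [hMfn]
  have hMdiv : ∀ m m', Mfn (m - m') = Mfn m / Mfn m' := by
    intro m m'
    rw [eq_div_iff (hM0 m'), ← hMadd, sub_add_cancel]
  have hMsmul : ∀ (z : ℤ) (m : Fin n → ℤ), Mfn (z • m) = Mfn m ^ z := by
    intro z m
    rw [hMfn, ← Finset.prod_zpow]
    refine Finset.prod_congr rfl fun i _ => ?_
    rw [Pi.smul_apply, smul_eq_mul, mul_comm, zpow_mul]
  -- weights
  set w : (Fin n → ℤ) → E := fun m => ∑ i, (m i : E) * (D (e i) / e i) with hwdef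
  have hwF : ∀ m, w m ∈ F :=
    fun m => Subfield.sum_mem _ fun i _ => F.mul_mem (F.intCast_mem _) (he i)
  have hDM : ∀ m, D (Mfn m) = w m * Mfn m := by
    intro m
    rw [hMfn, ExpoAux.dprod hD _ _ (fun i _ => zpow_ne_zero _ (he0 i)), hwdef]
    congr 1
    refine Finset.sum_congr rfl fun i _ => ?_
    rw [ExpoAux.dzpow hD (he0 i)]
    exact mul_div_cancel_right₀ _ (zpow_ne_zero _ (he0 i))
  -- the differential subfield K = F⟨u⟩
  set K := diffSubfieldClosure D (↑F ∪ {u}) with hK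
  have hmemK : ∀ x : E, x ∈ K ↔
      ∀ L ∈ {L : Subfield E | (↑F ∪ {u} : Set E) ⊆ ↑L ∧ ∀ a ∈ L, D a ∈ L}, x ∈ L := by
    intro x
    rw [hK, diffSubfieldClosure]
    exact Subfield.mem_sInf
  have hFK : ∀ x ∈ F, x ∈ K := by
    intro x hx
    rw [hmemK]
    intro L hL
    exact hL.1 (Set.mem_union_left _ hx)
  have huK : u ∈ K := by
    rw [hmemK]
    intro L hL
    exact hL.1 (Set.mem_union_right _ rfl)
  have hDK : ∀ x ∈ K, D x ∈ K := by
    intro x hx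
    rw [hmemK] at hx ⊢
    intro L hL
    exact hL.2 x (hx L hL)
  -- the subgroup H of exponents of monomials in K
  set H : Submodule ℤ (Fin n → ℤ) :=
    { carrier := {m | Mfn m ∈ K}
      add_mem' := fun {a b} ha hb => by
        simp only [Set.mem_setOf_eq] at *
        rw [hMadd]
        exact K.mul_mem ha hb
      zero_mem' := by
        simp only [Set.mem_setOf_eq]
        rw [hMzero]
        exact K.one_mem
      smul_mem' := fun z m hm => by
        simp only [Set.mem_setOf_eq] at *
        rw [hMsmul]
        exact Subfield.zpow_mem K hm z } with hHdef
  have hHmem : ∀ m : Fin n → ℤ, m ∈ H ↔ Mfn m ∈ K := fun m => Iff.rfl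
  obtain ⟨T, hT⟩ := IsNoetherian.noetherian H
  set p : Fin T.card → E := fun j => Mfn (T.equivFin.symm j : Fin n → ℤ) with hp
  refine ⟨T.card, p, fun j => ⟨(T.equivFin.symm j : Fin n → ℤ), by rw [hp, hMfn]⟩, ?_⟩
  set L' := Subfield.closure (↑F ∪ Set.range p) with hL'
  have hFL' : ∀ x ∈ F, x ∈ L' :=
    fun x hx => Subfield.subset_closure (Set.mem_union_left _ hx)
  have hTH : ∀ m ∈ T, m ∈ H := fun m hm => hT ▸ Submodule.subset_span hm
  have hpK : ∀ j, p j ∈ K := fun j =>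
    (hHmem _).mp (hTH _ (T.equivFin.symm j).2)
  -- L' is closed under D
  have hDL' : ∀ a ∈ L', D a ∈ L' := by
    intro a ha
    rw [hL'] at ha
    induction ha using Subfield.closure_induction with
    | mem x hx =>
      rcases hx with hx | hx
      · exact hFL' _ (hF x hx)
      · obtain ⟨j, rfl⟩ := hx
        have hDp : D (p j) = w (T.equivFin.symm j : Fin n → ℤ) * p j := by
          rw [hp]
          exact hDM _
        rw [hDp]
        exact L'.mul_mem (hFL' _ (hwF _))
          (Subfield.subset_closure (Set.mem_union_right _ ⟨j, rfl⟩))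
    | one =>
      rw [ExpoAux.d1 hD]
      exact L'.zero_mem
    | add x y hx hy ihx ihy =>
      rw [hD.map_add]
      exact L'.add_mem ihx ihy
    | neg x hx ihx =>
      rw [ExpoAux.dneg hD]
      exact L'.neg_mem ihx
    | inv x hx ihx =>
      by_cases hx0 : x = 0
      · rw [hx0, inv_zero, ExpoAux.d0 hD]
        exact L'.zero_mem
      · rw [ExpoAux.dinv hD hx0]
        exact L'.neg_mem (L'.mul_mem ihx (L'.mul_mem (L'.inv_mem hx) (L'.inv_mem hx)))
    | mul x y hx hy ihx ihy =>
      rw [hD.leibniz]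
      exact L'.add_mem (L'.mul_mem ihx hy) (L'.mul_mem hx ihy)
  -- monomials with exponents in H lie in L'
  have hHL' : ∀ m ∈ H, Mfn m ∈ L' := by
    set HL' : Submodule ℤ (Fin n → ℤ) :=
      { carrier := {m | Mfn m ∈ L'}
        add_mem' := fun {a b} ha hb => by
          simp only [Set.mem_setOf_eq] at *
          rw [hMadd]
          exact L'.mul_mem ha hb
        zero_mem' := by
          simp only [Set.mem_setOf_eq]
          rw [hMzero]
          exact L'.one_mem
        smul_mem' := fun z m hm => by
          simp only [Set.mem_setOf_eq] at *
          rw [hMsmul]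
          exact Subfield.zpow_mem L' hm z }
    intro m hm
    have hle : H ≤ HL' := by
      rw [← hT]
      refine Submodule.span_le.mpr ?_
      intro x hx
      have hxT : x ∈ T := hx
      show Mfn x ∈ L'
      have hx' : p (T.equivFin ⟨x, hxT⟩) = Mfn x := by
        simp only [hp]
        rw [Equiv.symm_apply_apply]
      rw [← hx']
      exact Subfield.subset_closure (Set.mem_union_right _ ⟨_, rfl⟩)
    exact hle hm
  -- the representation of elements of E as quotients of monomial sums
  set Ψ : Multiplicative (Fin n → ℤ) →* E :=
    { toFun := fun g => Mfn (Multiplicative.toAdd g)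
      map_one' := hMzero
      map_mul' := fun a b => hMadd _ _ } with hΨ
  set φ := (AddMonoidAlgebra.lift (↥F) E (Fin n → ℤ)) Ψ with hφdef
  have hrep : ∀ (f : AddMonoidAlgebra (↥F) (Fin n → ℤ)) (S : Finset (Fin n → ℤ)),
      f.coeff.support ⊆ S → φ f = ∑ m ∈ S, ((f.coeff m : E) * Mfn m) := by
    intro f S hS
    rw [hφdef, AddMonoidAlgebra.lift_apply, Finsupp.sum]
    rw [Finset.sum_subset hS (fun m _ hnm => by
      rw [Finsupp.notMem_support_iff.mp hnm]
      simp)]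
    rfl
  have hrepu : ∃ P Q : AddMonoidAlgebra (↥F) (Fin n → ℤ), φ Q ≠ 0 ∧ u = φ P / φ Q := by
    have hu : u ∈ Subfield.closure (↑F ∪ Set.range e) := hgen ▸ Subfield.mem_top u
    rw [Subfield.mem_closure_iff] at hu
    obtain ⟨y, hy, z, hz, hyz⟩ := hu
    have hsub : Subring.closure (↑F ∪ Set.range e) ≤ (φ.range).toSubring := by
      rw [Subring.closure_le]
      rintro x (hx | ⟨i, rfl⟩)
      · rw [SetLike.mem_coe, Subalgebra.mem_toSubring, AlgHom.mem_range]
        exact ⟨algebraMap (↥F) _ ⟨x, hx⟩, φ.commutes _⟩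
      · rw [SetLike.mem_coe, Subalgebra.mem_toSubring, AlgHom.mem_range]
        refine ⟨AddMonoidAlgebra.single (Pi.single i (1:ℤ)) 1, ?_⟩
        rw [hφdef, AddMonoidAlgebra.lift_single, one_smul]
        show Mfn (Pi.single i (1:ℤ)) = e i
        simp only [hMfn]
        rw [Finset.prod_eq_single i
          (fun j _ hj => by rw [Pi.single_eq_of_ne hj, zpow_zero])
          (fun h => absurd (Finset.mem_univ i) h)]
        rw [Pi.single_eq_same, zpow_one]
    by_cases hz0 : z = 0
    · refine ⟨0, 1, by rw [map_one]; exact one_ne_zero, ?_⟩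
      rw [map_zero, map_one, zero_div, ← hyz, hz0, div_zero]
    · obtain ⟨P, hP⟩ := (AlgHom.mem_range φ).mp (Subalgebra.mem_toSubring.mp (hsub hy))
      obtain ⟨Q, hQ⟩ := (AlgHom.mem_range φ).mp (Subalgebra.mem_toSubring.mp (hsub hz))
      exact ⟨P, Q, by rw [hQ]; exact hz0, by rw [hP, hQ, hyz]⟩
  -- main part : u ∈ L'
  have huL' : u ∈ L' := by
    obtain ⟨P, Q, hQ0, huPQ⟩ := hrepu
    set S : Finset (Fin n → ℤ) := P.coeff.support ∪ Q.coeff.support with hSdef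
    set kk : (Fin n → ℤ) → E := fun m => (P.coeff m : E) - u * (Q.coeff m : E) with hkk
    have hP' : φ P = ∑ m ∈ S, (P.coeff m : E) * Mfn m :=
      hrep P S Finset.subset_union_left
    have hQ' : φ Q = ∑ m ∈ S, (Q.coeff m : E) * Mfn m :=
      hrep Q S Finset.subset_union_right
    have hsumk : ∑ m ∈ S, kk m * Mfn m = 0 := by
      have heq : ∑ m ∈ S, kk m * Mfn m = φ P - u * φ Q := by
        rw [hP', hQ', Finset.mul_sum, ← Finset.sum_sub_distrib]
        exact Finset.sum_congr rfl fun m _ => by rw [hkk]; ring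
      rw [heq, huPQ, div_mul_cancel₀ _ hQ0, sub_self]
    -- classes modulo H
    set π : (Fin n → ℤ) → ((Fin n → ℤ) ⧸ H) := fun m => Submodule.Quotient.mk m with hπ
    set g : (Fin n → ℤ) → (Fin n → ℤ) := fun m => (π m).out with hg
    have hπg : ∀ m, π (g m) = π m := fun m => Quotient.out_eq _
    set S' : Finset (Fin n → ℤ) := S.image g with hS'
    have hgfix : ∀ m₀ ∈ S', g m₀ = m₀ := by
      intro m₀ hm₀
      obtain ⟨m₁, _, rfl⟩ := Finset.mem_image.mp hm₀
      show (π (g m₁)).out = g m₁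
      rw [hπg]
    have hfibH : ∀ m₀, ∀ m ∈ S.filter (fun m => g m = m₀), m - m₀ ∈ H := by
      intro m₀ m hm
      obtain ⟨hmS, hgm⟩ := Finset.mem_filter.mp hm
      have : π m = π m₀ := by rw [← hgm, hπg]
      exact (Submodule.Quotient.eq H).mp this
    have hfib : ∀ (f : (Fin n → ℤ) → E),
        ∑ m₀ ∈ S', ∑ m ∈ S.filter (fun m => g m = m₀), f m = ∑ m ∈ S, f m :=
      fun f => Finset.sum_fiberwise_of_maps_to (fun m hm => Finset.mem_image_of_mem g hm) f
    set kstar : (Fin n → ℤ) → E :=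
      fun m₀ => ∑ m ∈ S.filter (fun m => g m = m₀), kk m * Mfn (m - m₀) with hkstar
    have hkkK : ∀ m, kk m ∈ K := by
      intro m
      rw [hkk]
      exact K.sub_mem (hFK _ (P.coeff m).2) (K.mul_mem huK (hFK _ (Q.coeff m).2))
    have hkstarK : ∀ m₀, kstar m₀ ∈ K := by
      intro m₀
      rw [hkstar]
      exact Subfield.sum_mem _ fun m hm =>
        K.mul_mem (hkkK m) ((hHmem _).mp (hfibH m₀ m hm))
    have hkstarsum : ∑ m₀ ∈ S', kstar m₀ * Mfn m₀ = 0 := by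
      have : ∀ m₀, kstar m₀ * Mfn m₀
          = ∑ m ∈ S.filter (fun m => g m = m₀), kk m * Mfn m := by
        intro m₀
        rw [hkstar, Finset.sum_mul]
        refine Finset.sum_congr rfl fun m _ => ?_
        rw [mul_assoc, ← hMadd, sub_add_cancel]
      rw [Finset.sum_congr rfl fun m₀ _ => this m₀, hfib, hsumk]
    have hpairS' : ∀ m₀ ∈ S', ∀ m₀' ∈ S', m₀ ≠ m₀' → Mfn (m₀ - m₀') ∉ K := by
      intro m₀ hm₀ m₀' hm₀' hne hmem
      have h1 : π m₀ = π m₀' := (Submodule.Quotient.eq H).mpr ((hHmem _).mpr hmem)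
      have : m₀ = m₀' := by
        rw [← hgfix m₀ hm₀, ← hgfix m₀' hm₀', hg]
        show (π m₀).out = (π m₀').out
        rw [h1]
      exact hne this
    have hkstar0 : ∀ m₀ ∈ S', kstar m₀ = 0 :=
      ExpoAux.key hD F hNNC K hFK hDK w hwF Mfn hM0 hDM hMdiv S' kstar
        (fun m₀ _ => hkstarK m₀) hpairS' hkstarsum
    -- split kstar into numerator and denominator parts
    set cpart : (Fin n → ℤ) → E :=
      fun m₀ => ∑ m ∈ S.filter (fun m => g m = m₀), (P.coeff m : E) * Mfn (m - m₀) with hcpart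
    set dpart : (Fin n → ℤ) → E :=
      fun m₀ => ∑ m ∈ S.filter (fun m => g m = m₀), (Q.coeff m : E) * Mfn (m - m₀) with hdpart
    have hsplit : ∀ m₀, kstar m₀ = cpart m₀ - u * dpart m₀ := by
      intro m₀
      rw [hkstar, hcpart, hdpart, Finset.mul_sum, ← Finset.sum_sub_distrib]
      exact Finset.sum_congr rfl fun m _ => by rw [hkk]; ring
    have hcd : ∀ m₀ ∈ S', cpart m₀ = u * dpart m₀ := by
      intro m₀ hm₀
      have := hkstar0 m₀ hm₀
      rw [hsplit m₀] at this
      linear_combination this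
    have hdsum : ∑ m₀ ∈ S', dpart m₀ * Mfn m₀ = φ Q := by
      have : ∀ m₀, dpart m₀ * Mfn m₀
          = ∑ m ∈ S.filter (fun m => g m = m₀), (Q.coeff m : E) * Mfn m := by
        intro m₀
        rw [hdpart, Finset.sum_mul]
        refine Finset.sum_congr rfl fun m _ => ?_
        rw [mul_assoc, ← hMadd, sub_add_cancel]
      rw [Finset.sum_congr rfl fun m₀ _ => this m₀, hfib, hQ']
    have hex : ∃ m₀ ∈ S', dpart m₀ * Mfn m₀ ≠ 0 := by
      apply Finset.exists_ne_zero_of_sum_ne_zero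
      rw [hdsum]
      exact hQ0
    obtain ⟨m₀, hm₀S', hd0⟩ := hex
    have hdne : dpart m₀ ≠ 0 := fun h => hd0 (by rw [h, zero_mul])
    have hu' : u = cpart m₀ / dpart m₀ := by
      rw [eq_div_iff hdne, hcd m₀ hm₀S', mul_comm]
    have hcL' : cpart m₀ ∈ L' := by
      rw [hcpart]
      exact Subfield.sum_mem _ fun m hm =>
        L'.mul_mem (hFL' _ (P.coeff m).2) (hHL' _ (hfibH m₀ m hm))
    have hdL' : dpart m₀ ∈ L' := by
      rw [hdpart]
      exact Subfield.sum_mem _ fun m hm =>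
        L'.mul_mem (hFL' _ (Q.coeff m).2) (hHL' _ (hfibH m₀ m hm))
    rw [hu']
    exact L'.div_mem hcL' hdL'
  -- final equality
  apply le_antisymm
  · rw [hK, diffSubfieldClosure]
    apply sInf_le
    refine ⟨Set.union_subset (fun x hx => hFL' x hx)
      (Set.singleton_subset_iff.mpr huL'), hDL'⟩
  · rw [hL']
    refine Subfield.closure_le.mpr (Set.union_subset (fun x hx => hFK x hx) ?_)
    exact Set.range_subset_iff.mpr hpK
end

section
/- Let U be a characteristic-zero differential field whose field of constants C is algebraically closed, let F ⊆ U be a differential subfield whose field of constants is also C, and let M and E be differential subfields of U containing F. Suppose E is a tower of extensions by antiderivatives over F, i.e. there are differential subfields F = E_0 ⊆ E_1 ⊆ ⋯ ⊆ E_n = E such that for each i ≥ 1, E_i is generated as a field over E_{i−1} by finitely many elements whose derivatives lie in E_{i−1}. Then any u ∈ E that is algebraic over M lies in M. -/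
namespace Aux
variable {U : Type*} [Field U] {D : U → U}

theorem D_one (hD : IsDerivation D) : D 1 = 0 := by
  have := hD.leibniz 1 1; simpa using this

theorem D_zero (hD : IsDerivation D) : D 0 = 0 := by
  have := hD.map_add 0 0; simpa using this

/-- `D` as an additive monoid hom. -/
def Dh (hD : IsDerivation D) : U →+ U := AddMonoidHom.mk' D hD.map_add

@[simp] theorem Dh_apply (hD : IsDerivation D) (x : U) : Dh hD x = D x := rfl

theorem D_neg (hD : IsDerivation D) (a : U) : D (-a) = -D a := (Dh hD).map_neg a

theorem D_natCast (hD : IsDerivation D) (n : ℕ) : D (n : U) = 0 := by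
  induction n with
  | zero => simpa using D_zero hD
  | succ k ih => push_cast; rw [hD.map_add, ih, D_one hD, add_zero]

theorem D_pow (hD : IsDerivation D) (t : U) (n : ℕ) :
    D (t ^ n) = n * t ^ (n - 1) * D t := by
  induction n with
  | zero => simpa using D_one hD
  | succ k ih =>
    rw [pow_succ, hD.leibniz, ih]
    rcases Nat.eq_zero_or_pos k with hk | hk
    · subst hk; simp
    · have h1 : t ^ (k - 1) * t = t ^ k := by
        rw [← pow_succ, Nat.sub_add_cancel hk]
      have h2 : (k:U) * t ^ (k - 1) * D t * t = (k:U) * t ^ k * D t := by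
        rw [← h1]; ring
      rw [h2, Nat.add_sub_cancel]
      push_cast; ring

theorem D_inv (hD : IsDerivation D) (a : U) : D a⁻¹ = -(D a * (a⁻¹ * a⁻¹)) := by
  rcases eq_or_ne a 0 with rfl | ha
  · simp [D_zero hD]
  · have h : D (a * a⁻¹) = 0 := by rw [mul_inv_cancel₀ ha]; exact D_one hD
    rw [hD.leibniz] at h
    have h4 : a * D a⁻¹ = -(D a * a⁻¹) := by linear_combination h
    calc D a⁻¹ = a⁻¹ * (a * D a⁻¹) := by rw [inv_mul_cancel_left₀ ha]
      _ = a⁻¹ * (-(D a * a⁻¹)) := by rw [h4]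
      _ = -(D a * (a⁻¹ * a⁻¹)) := by ring

theorem closure_diff (hD : IsDerivation D) (s : Set U)
    (h : ∀ a ∈ s, D a ∈ Subfield.closure s) :
    ∀ x ∈ Subfield.closure s, D x ∈ Subfield.closure s := by
  intro x hx
  induction hx using Subfield.closure_induction with
  | mem a ha => exact h a ha
  | one => rw [D_one hD]; exact zero_mem _
  | add a b ha hb iha ihb => rw [hD.map_add]; exact add_mem iha ihb
  | neg a ha iha => rw [D_neg hD]; exact neg_mem iha
  | inv a ha iha =>
    rw [D_inv hD]
    exact neg_mem (mul_mem iha (mul_mem (inv_mem ha) (inv_mem ha)))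
  | mul a b ha hb iha ihb =>
    rw [hD.leibniz]; exact add_mem (mul_mem iha hb) (mul_mem ha ihb)

theorem antideriv_mem [CharZero U] (hD : IsDerivation D) (K : Subfield U)
    (hKd : ∀ a ∈ K, D a ∈ K) (hconst : ∀ x : U, D x = 0 → x ∈ K)
    (t : U) (ht : D t ∈ K) (halg : IsAlgebraic K t) : t ∈ K := by
  have hint : IsIntegral K t := halg.isIntegral
  set p := minpoly K t with hp
  set n := p.natDegree with hn
  have hn0 : 0 < n := minpoly.natDegree_pos hint
  have hmonic : p.Monic := minpoly.monic hint
  have hcn : (p.coeff n : U) = 1 := by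
    rw [hn, Polynomial.coeff_natDegree, hmonic.leadingCoeff]; simp
  have h0 : ∑ i ∈ Finset.range (n + 1), (p.coeff i : U) * t ^ i = 0 := by
    have e : Polynomial.aeval t p
        = ∑ i ∈ Finset.range (n + 1), (p.coeff i : U) * t ^ i := by
      rw [Polynomial.aeval_eq_sum_range]; rfl
    rw [← e]; exact minpoly.aeval K t
  have h1 : ∑ i ∈ Finset.range (n + 1),
      (D (p.coeff i : U) * t ^ i + (p.coeff i : U) * (i * t ^ (i - 1) * D t)) = 0 := by
    have h1' := congrArg (Dh hD) h0
    rw [map_sum, map_zero] at h1'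
    rw [← h1']
    apply Finset.sum_congr rfl
    intro i _
    rw [Dh_apply, hD.leibniz, D_pow hD]
  have h2 : ∑ i ∈ Finset.range n,
      ((D (p.coeff i : U) + (i + 1 : U) * (p.coeff (i + 1) : U) * D t) * t ^ i) = 0 := by
    rw [← h1, Finset.sum_add_distrib]
    rw [Finset.sum_range_succ (fun i => D (p.coeff i : U) * t ^ i)]
    rw [Finset.sum_range_succ' (fun i => (p.coeff i : U) * (i * t ^ (i - 1) * D t)) n]
    rw [hcn, D_one hD]
    simp only [zero_mul, add_zero, Nat.cast_zero, mul_zero]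
    rw [← Finset.sum_add_distrib]
    apply Finset.sum_congr rfl
    intro i _
    rw [Nat.add_sub_cancel]
    push_cast
    ring
  set d : ℕ → K := fun i => ⟨D (p.coeff i : U) + ((i : U) + 1) * (p.coeff (i + 1) : U) * D t, by
    refine add_mem (hKd _ (p.coeff i).2) (mul_mem (mul_mem ?_ (p.coeff (i + 1)).2) ht)
    have e : ((i : U) + 1) = ((i + 1 : ℕ) : U) := by push_cast; ring
    rw [e]
    exact natCast_mem K (i + 1)⟩ with hd
  set r : Polynomial K := ∑ i ∈ Finset.range n, Polynomial.C (d i) * Polynomial.X ^ i with hr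
  have haveval : Polynomial.aeval t r = 0 := by
    rw [hr, map_sum]
    simp only [map_mul, Polynomial.aeval_C, map_pow, Polynomial.aeval_X]
    exact h2
  have hrz : r = 0 := by
    by_contra hrne
    have hle := minpoly.degree_le_of_ne_zero K t hrne haveval
    have hlt : r.degree < (n : WithBot ℕ) := by
      apply lt_of_le_of_lt (Polynomial.degree_sum_le _ _)
      refine (Finset.sup_lt_iff (show (⊥ : WithBot ℕ) < (n : WithBot ℕ) from
        WithBot.bot_lt_coe n)).mpr ?_
      intro i hi
      exact (Polynomial.degree_C_mul_X_pow_le i (d i)).trans_lt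
        (WithBot.coe_lt_coe.mpr (Finset.mem_range.mp hi))
    rw [Polynomial.degree_eq_natDegree hmonic.ne_zero, ← hn] at hle
    exact absurd (lt_of_le_of_lt hle hlt) (lt_irrefl _)
  have hdz : d (n - 1) = 0 := by
    have hc := congrArg (fun q => Polynomial.coeff q (n - 1)) hrz
    simp only [hr, Polynomial.finset_sum_coeff, Polynomial.coeff_C_mul,
      Polynomial.coeff_X_pow, Polynomial.coeff_zero, mul_ite, mul_one, mul_zero] at hc
    rwa [Finset.sum_ite_eq (Finset.range n) (n - 1) (fun i => d i),
      if_pos (Finset.mem_range.mpr (Nat.sub_lt hn0 one_pos))] at hc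
  have hd' : D (p.coeff (n - 1) : U) + (n : U) * D t = 0 := by
    have hval := congrArg (fun x : K => (x : U)) hdz
    simp only [hd] at hval
    have e1 : n - 1 + 1 = n := Nat.succ_pred_eq_of_pos hn0
    have e2 : (((n : ℕ) - 1 : ℕ) : U) + 1 = (n : U) := by
      rw [show ((n - 1 : ℕ) : U) + 1 = ((n - 1 + 1 : ℕ) : U) by push_cast; ring, e1]
    rw [e1, e2, hcn] at hval
    simpa using hval
  have hw : D ((n : U) * t + (p.coeff (n - 1) : U)) = 0 := by
    rw [hD.map_add, hD.leibniz, D_natCast hD]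
    linear_combination hd'
  have hwK := hconst _ hw
  have hnt : (n : U) * t ∈ K := by
    have := sub_mem hwK (p.coeff (n - 1)).2
    simpa using this
  have hnK : ((n : ℕ) : U) ∈ K := natCast_mem K n
  have hnne : ((n : ℕ) : U) ≠ 0 := Nat.cast_ne_zero.mpr hn0.ne'
  rw [show t = ((n : U))⁻¹ * ((n : U) * t) from (inv_mul_cancel_left₀ hnne t).symm]
  exact mul_mem (inv_mem hnK) hnt

/-- If `t` is transcendental over `F` and `x ∈ F(t)` is algebraic over `F`, then `x ∈ F`. -/
theorem mem_bot_of_algebraic_of_transcendental {F E : Type*} [Field F] [Field E] [Algebra F E]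
    {t x : E} (ht : Transcendental F t) (hx : IsAlgebraic F x)
    (hmem : x ∈ IntermediateField.adjoin F {t}) : x ∈ Set.range (algebraMap F E) := by
  obtain ⟨p, q, hpq⟩ := (IntermediateField.mem_adjoin_simple_iff F x).mp hmem
  by_cases hq : q = 0
  · subst hq
    simp only [map_zero, div_zero] at hpq
    exact ⟨0, by rw [map_zero, hpq]⟩
  have hqt : (Polynomial.aeval t) q ≠ 0 := fun h => ht ⟨q, hq, h⟩
  set L := IntermediateField.adjoin F {x} with hL
  have hxL : x ∈ L := IntermediateField.mem_adjoin_simple_self F x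
  have hLalg : Algebra.IsAlgebraic F L :=
    IntermediateField.isAlgebraic_adjoin_simple hx.isIntegral
  have hLint : Algebra.IsIntegral F L := hLalg.isIntegral
  have htL : Transcendental L t := by
    intro h
    exact ht (isIntegral_trans t h.isIntegral).isAlgebraic
  set xL : L := ⟨x, hxL⟩ with hxLdef
  set r : Polynomial L :=
    p.map (algebraMap F L) - Polynomial.C xL * q.map (algebraMap F L) with hr
  have hre : (Polynomial.aeval t) r = 0 := by
    rw [hr, map_sub, map_mul, Polynomial.aeval_C, Polynomial.aeval_map_algebraMap,
      Polynomial.aeval_map_algebraMap]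
    have hax : (algebraMap L E) xL = x := rfl
    rw [hax, sub_eq_zero, hpq, div_mul_cancel₀]
    exact hqt
  have hrz : r = 0 := by
    by_contra hrne
    exact htL ⟨r, hrne, hre⟩
  have hcoeff : ∀ i, algebraMap F L (p.coeff i) = xL * algebraMap F L (q.coeff i) := by
    intro i
    have := congrArg (fun s => Polynomial.coeff s i) hrz
    simp only [hr, Polynomial.coeff_sub, Polynomial.coeff_C_mul, Polynomial.coeff_map,
      Polynomial.coeff_zero, sub_eq_zero] at this
    exact this
  have hi : q.coeff q.natDegree ≠ 0 := Polynomial.leadingCoeff_ne_zero.mpr hq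
  have hxval : xL = algebraMap F L (p.coeff q.natDegree / q.coeff q.natDegree) := by
    rw [map_div₀, hcoeff q.natDegree, mul_div_assoc, div_self, mul_one]
    exact (map_ne_zero_iff _ (algebraMap F L).injective).mpr hi
  refine ⟨p.coeff q.natDegree / q.coeff q.natDegree, ?_⟩
  have := congrArg (algebraMap L E) hxval
  rw [← IsScalarTower.algebraMap_apply] at this
  exact this.symm

theorem isAlgebraic_mono {U : Type*} [Field U] {M K : Subfield U} (h : M ≤ K) {x : U}
    (hx : IsAlgebraic M x) : IsAlgebraic K x := by
  obtain ⟨p, hp0, hpe⟩ := hx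
  have hinj : Function.Injective (Subfield.inclusion h) :=
    fun a b hab => by
      have h2 := congrArg (Subtype.val : K → U) hab
      exact Subtype.ext h2
  refine ⟨p.map (Subfield.inclusion h), ?_, ?_⟩
  · exact (Polynomial.map_ne_zero_iff hinj).mpr hp0
  · rw [Polynomial.aeval_def, Polynomial.eval₂_map]
    have : (algebraMap K U).comp (Subfield.inclusion h : M →+* K) = algebraMap M U :=
      RingHom.ext fun a => rfl
    rw [this]
    exact hpe

theorem mem_adjoin_of_mem_closure {U : Type*} [Field U] (K : Subfield U) (t x : U)
    (hx : x ∈ Subfield.closure (↑K ∪ {t})) : x ∈ IntermediateField.adjoin K {t} := by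
  have hsub : (↑K ∪ {t} : Set U) ⊆ (IntermediateField.adjoin K {t}).toSubfield := by
    rintro y (hy | hy)
    · exact (IntermediateField.adjoin K {t}).algebraMap_mem ⟨y, hy⟩
    · exact IntermediateField.subset_adjoin K {t} hy
  exact Subfield.closure_le.mpr hsub hx

theorem step1 {U : Type*} [Field U] [CharZero U] {D : U → U} (hD : IsDerivation D)
    (M : Subfield U) (hMconst : ∀ x : U, D x = 0 → x ∈ M)
    (K : Subfield U) (hMK : M ≤ K) (hKd : ∀ a ∈ K, D a ∈ K)
    (hrel : ∀ x ∈ K, IsAlgebraic M x → x ∈ M) (t : U) (ht : D t ∈ K) :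
    M ≤ Subfield.closure (↑K ∪ {t}) ∧
    (∀ a ∈ Subfield.closure (↑K ∪ {t}), D a ∈ Subfield.closure ((K : Set U) ∪ {t})) ∧
    (∀ x ∈ Subfield.closure ((K : Set U) ∪ {t}), IsAlgebraic M x → x ∈ M) := by
  have hKle : K ≤ Subfield.closure ((K : Set U) ∪ {t}) :=
    fun y hy => Subfield.subset_closure (Or.inl hy)
  refine ⟨le_trans hMK hKle, ?_, ?_⟩
  · apply closure_diff hD
    rintro a (ha | ha)
    · exact hKle (hKd a ha)
    · rw [Set.mem_singleton_iff] at ha; subst ha; exact hKle ht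
  · intro x hx halgM
    by_cases halg : IsAlgebraic K t
    · have htK : t ∈ K := antideriv_mem hD K hKd (fun y hy => hMK (hMconst y hy)) t ht halg
      have hclK : Subfield.closure ((K : Set U) ∪ {t}) ≤ K := by
        apply Subfield.closure_le.mpr
        rintro y (hy | hy)
        · exact hy
        · rw [Set.mem_singleton_iff] at hy; subst hy; exact htK
      exact hrel x (hclK hx) halgM
    · have htrans : Transcendental K t := halg
      have hxadj := mem_adjoin_of_mem_closure K t x hx
      have halgK : IsAlgebraic K x := isAlgebraic_mono hMK halgM
      obtain ⟨y, hy⟩ := mem_bot_of_algebraic_of_transcendental htrans halgK hxadj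
      have hxK : x ∈ K := by rw [← hy]; exact y.2
      exact hrel x hxK halgM

theorem stepS {U : Type*} [Field U] [CharZero U] {D : U → U} (hD : IsDerivation D)
    (M : Subfield U) (hMconst : ∀ x : U, D x = 0 → x ∈ M) (s : Finset U) :
    ∀ K : Subfield U, M ≤ K → (∀ a ∈ K, D a ∈ K) →
    (∀ x ∈ K, IsAlgebraic M x → x ∈ M) → (∀ a ∈ s, D a ∈ K) →
    M ≤ Subfield.closure ((K : Set U) ∪ ↑s) ∧
    (∀ a ∈ Subfield.closure ((K : Set U) ∪ ↑s), D a ∈ Subfield.closure ((K : Set U) ∪ ↑s)) ∧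
    (∀ x ∈ Subfield.closure ((K : Set U) ∪ ↑s), IsAlgebraic M x → x ∈ M) := by
  classical
  induction s using Finset.induction_on with
  | empty =>
    intro K h1 h2 h3 _
    rw [Finset.coe_empty, Set.union_empty, Subfield.closure_eq]
    exact ⟨h1, h2, h3⟩
  | @insert a s ha ih =>
    intro K h1 h2 h3 hs
    have key := step1 hD M hMconst K h1 h2 h3 a (hs a (Finset.mem_insert_self a s))
    set K' := Subfield.closure ((K : Set U) ∪ {a}) with hK'
    have hKK' : K ≤ K' := fun y hy => Subfield.subset_closure (Or.inl hy)
    have heq : Subfield.closure ((K : Set U) ∪ ↑(insert a s))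
        = Subfield.closure ((K' : Set U) ∪ ↑s) := by
      apply le_antisymm
      · apply Subfield.closure_le.mpr
        rintro y (hy | hy)
        · exact Subfield.subset_closure (Or.inl (hKK' hy))
        · rw [Finset.coe_insert, Set.mem_insert_iff] at hy
          rcases hy with rfl | hy
          · exact Subfield.subset_closure (Or.inl (Subfield.subset_closure (Or.inr rfl)))
          · exact Subfield.subset_closure (Or.inr hy)
      · apply Subfield.closure_le.mpr
        rintro y (hy | hy)
        · refine Subfield.closure_mono ?_ hy
          rintro z (hz | hz)
          · exact Or.inl hz
          · rw [Set.mem_singleton_iff] at hz; subst hz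
            exact Or.inr (by simp)
        · exact Subfield.subset_closure (Or.inr (by simp [hy]))
    rw [heq]
    exact ih K' key.1 key.2.1 key.2.2
      (fun b hb => hKK' (hs b (Finset.mem_insert_of_mem hb)))

end Aux

/-- Let `U` be a characteristic-zero differential field whose field of constants `C`
is algebraically closed, let `F ⊆ U` be a differential subfield whose constants are
also `C`, and let `M` be a differential subfield of `U` containing `F`.  Suppose
`F = E₀ ⊆ E₁ ⊆ ⋯ ⊆ Eₙ = E` is a tower of differential subfields where each `Eᵢ` is
generated as a field over `Eᵢ₋₁` by finitely many antiderivatives of `Eᵢ₋₁`.  Then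
any element of `E` algebraic over `M` lies in `M`. -/
theorem tower_of_antiderivatives_algebraic_mem
    {U : Type*} [Field U] [CharZero U]
    (D : U → U) (hD : IsDerivation D)
    (C : Subfield U) (hC : ∀ c : U, c ∈ C ↔ D c = 0)
    [IsAlgClosed C]
    (F : Subfield U) (hF : ∀ a ∈ F, D a ∈ F) (hCF : C ≤ F)
    (M : Subfield U) (hFM : F ≤ M) (hM : ∀ a ∈ M, D a ∈ M)
    {n : ℕ} (Etow : Fin (n + 1) → Subfield U)
    (hE0 : Etow 0 = F)
    (hEdiff : ∀ i, ∀ a ∈ Etow i, D a ∈ Etow i)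
    (hstep : ∀ i : Fin n, ∃ s : Finset U,
      (∀ a ∈ s, D a ∈ Etow i.castSucc) ∧
      Etow i.succ = Subfield.closure (↑(Etow i.castSucc) ∪ ↑s))
    (u : U) (hu : u ∈ Etow (Fin.last n)) (halg : IsAlgebraic M u) :
    u ∈ M := by
  have hMconst : ∀ x : U, D x = 0 → x ∈ M := fun x hx => hFM (hCF ((hC x).mpr hx))
  have main : ∀ i : Fin (n + 1), ∃ K : Subfield U, Etow i ≤ K ∧ M ≤ K ∧
      (∀ a ∈ K, D a ∈ K) ∧ (∀ x ∈ K, IsAlgebraic M x → x ∈ M) := by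
    intro i
    induction i using Fin.induction with
    | zero => exact ⟨M, by rw [hE0]; exact hFM, le_refl M, hM, fun x hx _ => hx⟩
    | succ i ih =>
      obtain ⟨K, hEK, hMK, hKd, hrel⟩ := ih
      obtain ⟨s, hs, hEsucc⟩ := hstep i
      have h := Aux.stepS hD M hMconst s K hMK hKd hrel (fun a ha => hEK (hs a ha))
      refine ⟨Subfield.closure ((K : Set U) ∪ ↑s), ?_, h.1, h.2.1, h.2.2⟩
      rw [hEsucc]
      exact Subfield.closure_mono (Set.union_subset_union_left _ hEK)
  obtain ⟨K, hEK, _, _, hrel⟩ := main (Fin.last n)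
  exact hrel u (hEK hu) halg
end
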